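/- arXiv:2508.18144 — 5 statements merged into one kernel-verified Lean document; each statement's English description precedes it below -/
import Mathlib

section
/- Let T_n = L_1 + ⋯ + L_{n-1} where the L_k are independent and L_k is exponentially distributed with mean m+k-1 (for a fixed integer m ≥ 1). Then T_n / n² → 1/2 almost surely as n → ∞. -/
open MeasureTheory ProbabilityTheory
open Set Filter

lemma intOn_exp {r : ℝ} (hr : 0 < r) :
    IntegrableOn (fun t : ℝ => Real.exp (-(t / r))) (Ioi 0) := by
  have := exp_neg_integrableOn_Ioi 0 (b := r⁻¹) (by positivity)
  simpa [div_eq_inv_mul] using this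

lemma int_exp {r : ℝ} (hr : 0 < r) :
    ∫ t in Ioi (0:ℝ), Real.exp (-(t / r)) = r := by
  have h := Real.integral_rpow_mul_exp_neg_mul_Ioi (a := 1) (r := r⁻¹) one_pos (by positivity)
  simp only [sub_self, Real.rpow_zero, one_mul, Real.Gamma_one, mul_one] at h
  rw [show (fun t : ℝ => Real.exp (-(t / r))) = fun t : ℝ => Real.exp (-(r⁻¹ * t)) by
    funext t; rw [div_eq_inv_mul]]
  rw [h]
  simp [one_div, inv_inv, hr.le]

lemma intOn_mul_exp {r : ℝ} (hr : 0 < r) :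
    IntegrableOn (fun t : ℝ => t * Real.exp (-(t / r))) (Ioi 0) := by
  have base : IntegrableOn (fun x : ℝ => Real.exp (-x) * x ^ ((2:ℝ) - 1)) (Ioi 0) :=
    Real.GammaIntegral_convergent two_pos
  have base' : IntegrableOn (fun x : ℝ => x * Real.exp (-x)) (Ioi 0) := by
    apply base.congr_fun (fun x hx => ?_) measurableSet_Ioi
    rw [show (2:ℝ) - 1 = 1 by norm_num, Real.rpow_one, mul_comm]
  have h := (integrableOn_Ioi_comp_mul_left_iff (fun x : ℝ => x * Real.exp (-x)) 0
    (a := r⁻¹) (by positivity)).mpr (by simpa using base')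
  have h2 : IntegrableOn (fun x : ℝ => r * (r⁻¹ * x * Real.exp (-(r⁻¹ * x)))) (Ioi 0) :=
    h.const_mul r
  apply h2.congr_fun (fun x hx => ?_) measurableSet_Ioi
  rw [div_eq_inv_mul, ← mul_assoc, ← mul_assoc, mul_inv_cancel₀ hr.ne', one_mul]

lemma int_mul_exp {r : ℝ} (hr : 0 < r) :
    ∫ t in Ioi (0:ℝ), t * Real.exp (-(t / r)) = r ^ 2 := by
  have h := Real.integral_rpow_mul_exp_neg_mul_Ioi (a := 2) (r := r⁻¹) two_pos (by positivity)
  have hG : Real.Gamma 2 = 1 := by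
    rw [show (2:ℝ) = (1:ℕ) + 1 by norm_num, Real.Gamma_nat_eq_factorial]; simp
  rw [hG, mul_one] at h
  rw [show (fun t : ℝ => t * Real.exp (-(t / r))) = fun t : ℝ => t ^ ((2:ℝ)-1) * Real.exp (-(r⁻¹ * t)) from ?_]
  · rw [h, one_div, inv_inv, ← Real.rpow_natCast r 2]; norm_num
  · funext t
    rw [show (2:ℝ) - 1 = 1 by norm_num, Real.rpow_one, div_eq_inv_mul]
open MeasureTheory Set ProbabilityTheory

section Aux
variable {Ω : Type*} [MeasurableSpace Ω] {μ : Measure Ω} [IsProbabilityMeasure μ]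
  {X : Ω → ℝ} {r : ℝ}

lemma exp_ae_pos (hX : Measurable X) (hr : 0 < r)
    (hlaw : ∀ t : ℝ, 0 ≤ t → μ {ω | t < X ω} = ENNReal.ofReal (Real.exp (-(t / r)))) :
    ∀ᵐ ω ∂μ, 0 < X ω := by
  have h := hlaw 0 le_rfl
  simp only [zero_div, neg_zero, Real.exp_zero, ENNReal.ofReal_one] at h
  have : μ {ω | 0 < X ω}ᶜ = 0 := by
    rw [prob_compl_eq_zero_iff (measurableSet_lt measurable_const hX)]
    exact h
  filter_upwards [measure_eq_zero_iff_ae_notMem.mp this] with ω hω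
  simpa using hω

lemma exp_lint1 (hX : Measurable X) (hr : 0 < r)
    (hlaw : ∀ t : ℝ, 0 ≤ t → μ {ω | t < X ω} = ENNReal.ofReal (Real.exp (-(t / r)))) :
    ∫⁻ ω, ENNReal.ofReal (X ω) ∂μ = ENNReal.ofReal r := by
  have hnn : 0 ≤ᵐ[μ] X := (exp_ae_pos hX hr hlaw).mono fun ω h => h.le
  rw [lintegral_eq_lintegral_meas_lt μ hnn hX.aemeasurable]
  have : ∀ t ∈ Ioi (0:ℝ), μ {a | t < X a} = ENNReal.ofReal (Real.exp (-(t / r))) :=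
    fun t ht => hlaw t (le_of_lt ht)
  rw [setLIntegral_congr_fun measurableSet_Ioi this,
    ← ofReal_integral_eq_lintegral_ofReal (intOn_exp hr)
      (Filter.Eventually.of_forall fun t => (Real.exp_pos _).le),
    int_exp hr]

lemma exp_integrable (hX : Measurable X) (hr : 0 < r)
    (hlaw : ∀ t : ℝ, 0 ≤ t → μ {ω | t < X ω} = ENNReal.ofReal (Real.exp (-(t / r)))) :
    Integrable X μ := by
  have hnn : 0 ≤ᵐ[μ] X := (exp_ae_pos hX hr hlaw).mono fun ω h => h.le
  refine ⟨hX.aestronglyMeasurable, ?_⟩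
  rw [hasFiniteIntegral_iff_ofReal hnn, exp_lint1 hX hr hlaw]
  exact ENNReal.ofReal_lt_top

lemma exp_mean (hX : Measurable X) (hr : 0 < r)
    (hlaw : ∀ t : ℝ, 0 ≤ t → μ {ω | t < X ω} = ENNReal.ofReal (Real.exp (-(t / r)))) :
    ∫ ω, X ω ∂μ = r := by
  have hnn : 0 ≤ᵐ[μ] X := (exp_ae_pos hX hr hlaw).mono fun ω h => h.le
  rw [integral_eq_lintegral_of_nonneg_ae hnn hX.aestronglyMeasurable,
    exp_lint1 hX hr hlaw, ENNReal.toReal_ofReal hr.le]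

lemma exp_lint2 (hX : Measurable X) (hr : 0 < r)
    (hlaw : ∀ t : ℝ, 0 ≤ t → μ {ω | t < X ω} = ENNReal.ofReal (Real.exp (-(t / r)))) :
    ∫⁻ ω, ENNReal.ofReal (X ω ^ 2) ∂μ = ENNReal.ofReal (2 * r ^ 2) := by
  have hnn : 0 ≤ᵐ[μ] X := (exp_ae_pos hX hr hlaw).mono fun ω h => h.le
  have key := lintegral_comp_eq_lintegral_meas_lt_mul μ hnn hX.aemeasurable
    (g := fun t => 2 * t)
    (fun t _ => (intervalIntegral.intervalIntegrable_id (μ := volume) (a := 0) (b := t)).const_mul 2)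
    ?_
  · have h1 : ∀ ω, ENNReal.ofReal (∫ t in (0:ℝ)..(X ω), 2 * t) = ENNReal.ofReal (X ω ^ 2) := by
      intro ω
      congr 1
      rw [intervalIntegral.integral_const_mul, integral_id]
      ring
    simp_rw [h1] at key
    rw [key]
    have h2 : ∀ t ∈ Ioi (0:ℝ), μ {a | t < X a} * ENNReal.ofReal (2 * t)
        = ENNReal.ofReal (Real.exp (-(t / r)) * (2 * t)) := by
      intro t ht
      rw [hlaw t (le_of_lt ht), ← ENNReal.ofReal_mul (Real.exp_pos _).le]
    rw [setLIntegral_congr_fun measurableSet_Ioi h2]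
    have hint : IntegrableOn (fun t : ℝ => Real.exp (-(t / r)) * (2 * t)) (Ioi 0) := by
      have := (intOn_mul_exp hr).const_mul 2
      apply Integrable.congr this
      filter_upwards with t
      ring
    rw [← ofReal_integral_eq_lintegral_ofReal hint ?_]
    · congr 1
      have : ∀ t ∈ Ioi (0:ℝ), Real.exp (-(t / r)) * (2 * t) = 2 * (t * Real.exp (-(t / r))) := by
        intro t _; ring
      rw [setIntegral_congr_fun measurableSet_Ioi this, MeasureTheory.integral_const_mul, int_mul_exp hr]
    · filter_upwards [ae_restrict_mem measurableSet_Ioi] with t ht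
      have : (0:ℝ) < t := ht
      positivity
  · filter_upwards [ae_restrict_mem measurableSet_Ioi] with t ht
    have : (0:ℝ) < t := ht
    positivity

lemma exp_memLp (hX : Measurable X) (hr : 0 < r)
    (hlaw : ∀ t : ℝ, 0 ≤ t → μ {ω | t < X ω} = ENNReal.ofReal (Real.exp (-(t / r)))) :
    MemLp X 2 μ := by
  rw [memLp_two_iff_integrable_sq hX.aestronglyMeasurable]
  have hnn : ∀ᵐ ω ∂μ, 0 ≤ X ω ^ 2 := Filter.Eventually.of_forall fun ω => sq_nonneg _
  refine ⟨(hX.pow_const 2).aestronglyMeasurable, ?_⟩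
  rw [hasFiniteIntegral_iff_ofReal hnn, exp_lint2 hX hr hlaw]
  exact ENNReal.ofReal_lt_top

lemma exp_sq_mean (hX : Measurable X) (hr : 0 < r)
    (hlaw : ∀ t : ℝ, 0 ≤ t → μ {ω | t < X ω} = ENNReal.ofReal (Real.exp (-(t / r)))) :
    ∫ ω, X ω ^ 2 ∂μ = 2 * r ^ 2 := by
  have hnn : ∀ᵐ ω ∂μ, 0 ≤ X ω ^ 2 := Filter.Eventually.of_forall fun ω => sq_nonneg _
  rw [integral_eq_lintegral_of_nonneg_ae hnn (hX.pow_const 2).aestronglyMeasurable,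
    exp_lint2 hX hr hlaw, ENNReal.toReal_ofReal (by positivity)]

lemma exp_variance (hX : Measurable X) (hr : 0 < r)
    (hlaw : ∀ t : ℝ, 0 ≤ t → μ {ω | t < X ω} = ENNReal.ofReal (Real.exp (-(t / r)))) :
    variance X μ = r ^ 2 := by
  rw [variance_eq_sub (exp_memLp hX hr hlaw)]
  have h2 : μ[X ^ 2] = 2 * r ^ 2 := by
    rw [show (X ^ 2 : Ω → ℝ) = fun ω => X ω ^ 2 from rfl]
    exact exp_sq_mean hX hr hlaw
  rw [h2, exp_mean hX hr hlaw]
  ring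
open Filter

lemma sum_cast_range (n : ℕ) : ∑ k ∈ Finset.range n, (k:ℝ) = n * (n - 1) / 2 := by
  induction n with
  | zero => simp
  | succ n ih => rw [Finset.sum_range_succ, ih]; push_cast; ring

lemma ES_div_tendsto (m : ℕ) :
    Tendsto (fun n : ℕ => (∑ k ∈ Finset.range n, ((m:ℝ) + k)) / (n:ℝ)^2)
      atTop (nhds (1/2)) := by
  have h0 : Tendsto (fun n : ℕ => 1 / (n:ℝ)) atTop (nhds 0) :=
    tendsto_one_div_atTop_nhds_zero_nat
  have h : Tendsto (fun n : ℕ => (m:ℝ) * (1/(n:ℝ)) + (1 - 1/(n:ℝ)) / 2) atTop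
      (nhds ((m:ℝ) * 0 + (1 - 0)/2)) :=
    ((tendsto_const_nhds.mul h0).add ((tendsto_const_nhds.sub h0).div_const 2))
  rw [show (m:ℝ) * 0 + (1 - 0)/2 = 1/2 by ring] at h
  apply h.congr'
  filter_upwards [eventually_ge_atTop 1] with n hn
  have hn' : (n:ℝ) ≠ 0 := Nat.cast_ne_zero.2 (by omega)
  rw [Finset.sum_add_distrib, Finset.sum_const, sum_cast_range]
  simp only [Finset.card_range, nsmul_eq_mul]
  field_simp

lemma ratio_tendsto : Tendsto (fun j : ℕ => (j:ℝ) / ((j:ℝ)+1)) atTop (nhds 1) := by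
  have h0 : Tendsto (fun j : ℕ => 1 / ((j:ℝ)+1)) atTop (nhds 0) :=
    tendsto_one_div_add_atTop_nhds_zero_nat
  have h : Tendsto (fun j : ℕ => 1 - 1/((j:ℝ)+1)) atTop (nhds (1 - 0)) :=
    tendsto_const_nhds.sub h0
  rw [sub_zero] at h
  apply h.congr
  intro j
  have : ((j:ℝ)+1) ≠ 0 := by positivity
  field_simp
  ring

lemma ratio_tendsto' : Tendsto (fun j : ℕ => ((j:ℝ)+1) / (j:ℝ)) atTop (nhds 1) := by
  have h0 : Tendsto (fun j : ℕ => 1 / (j:ℝ)) atTop (nhds 0) :=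
    tendsto_one_div_atTop_nhds_zero_nat
  have h : Tendsto (fun j : ℕ => 1 + 1/(j:ℝ)) atTop (nhds (1 + 0)) :=
    tendsto_const_nhds.add h0
  rw [add_zero] at h
  apply h.congr'
  filter_upwards [eventually_ge_atTop 1] with j hj
  have : (j:ℝ) ≠ 0 := Nat.cast_ne_zero.2 (by omega)
  field_simp

lemma sqrt_tendsto : Tendsto Nat.sqrt atTop atTop := by
  apply tendsto_atTop_atTop.2
  intro b
  exact ⟨b*b, fun n hn => Nat.le_sqrt.2 hn⟩

lemma pred_ratio_tendsto : Tendsto (fun n : ℕ => ((n-1 : ℕ):ℝ) / (n:ℝ)) atTop (nhds 1) := by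
  have h0 : Tendsto (fun n : ℕ => 1 / (n:ℝ)) atTop (nhds 0) :=
    tendsto_one_div_atTop_nhds_zero_nat
  have h : Tendsto (fun n : ℕ => 1 - 1/(n:ℝ)) atTop (nhds (1 - 0)) :=
    tendsto_const_nhds.sub h0
  rw [sub_zero] at h
  apply h.congr'
  filter_upwards [eventually_ge_atTop 1] with n hn
  have h1 : ((n-1:ℕ):ℝ) = (n:ℝ) - 1 := by
    push_cast [Nat.cast_sub hn]; ring
  have : (n:ℝ) ≠ 0 := Nat.cast_ne_zero.2 (by omega)
  rw [h1]
  field_simp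

end Aux

/-- Let `T_n = L_1 + ⋯ + L_{n-1}` where the `L_k` are independent and `L_k` is exponentially
distributed with mean `m + k - 1` (for a fixed integer `m ≥ 1`).  Then `T_n / n² → 1/2`
almost surely as `n → ∞`.  Here `L k` (for `k : ℕ`) plays the role of `L_{k+1}`, so it has
mean `m + k`, and `T n = ∑_{k < n-1} L k`. -/
theorem birth_times_asymptotics
    {Ω : Type*} [MeasurableSpace Ω] (μ : Measure Ω) [IsProbabilityMeasure μ]
    (m : ℕ) (hm : 1 ≤ m) (L : ℕ → Ω → ℝ)
    (hmeas : ∀ k, Measurable (L k))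
    (hindep : iIndepFun L μ)
    (hlaw : ∀ k : ℕ, ∀ t : ℝ, 0 ≤ t →
      μ {ω | t < L k ω} = ENNReal.ofReal (Real.exp (-(t / ((m : ℝ) + (k : ℝ)))))) :
    ∀ᵐ ω ∂μ,
      Filter.Tendsto
        (fun n : ℕ => (∑ k ∈ Finset.range (n - 1), L k ω) / (n : ℝ) ^ 2)
        Filter.atTop (nhds (1 / 2)) := by
  classical
  have hm' : (1:ℝ) ≤ (m:ℝ) := by exact_mod_cast hm
  set θ : ℕ → ℝ := fun k => (m:ℝ) + k with hθdef
  have hθ : ∀ k, 0 < θ k := fun k => by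
    have : (0:ℝ) ≤ (k:ℝ) := Nat.cast_nonneg k
    simp only [hθdef]; linarith
  have hmem : ∀ k, MemLp (L k) 2 μ := fun k => exp_memLp (hmeas k) (hθ k) (hlaw k)
  have hmean : ∀ k, ∫ ω, L k ω ∂μ = θ k := fun k => exp_mean (hmeas k) (hθ k) (hlaw k)
  have hvar : ∀ k, variance (L k) μ = θ k ^ 2 := fun k => exp_variance (hmeas k) (hθ k) (hlaw k)
  set S : ℕ → Ω → ℝ := fun n ω => ∑ k ∈ Finset.range n, L k ω with hSdef
  have hSfun : ∀ n, S n = ∑ k ∈ Finset.range n, L k := by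
    intro n; funext ω; simp [hSdef, Finset.sum_apply]
  have hSmean : ∀ n, ∫ ω, S n ω ∂μ = ∑ k ∈ Finset.range n, θ k := by
    intro n
    rw [show (fun ω => S n ω) = fun ω => ∑ k ∈ Finset.range n, L k ω from rfl,
      integral_finset_sum _ (fun k _ => ((hmem k).integrable one_le_two))]
    exact Finset.sum_congr rfl fun k _ => hmean k
  have hSmem : ∀ n, MemLp (S n) 2 μ := fun n => by
    rw [hSfun n]; exact memLp_finset_sum' _ (fun k _ => hmem k)
  have hSvar : ∀ n, variance (S n) μ = ∑ k ∈ Finset.range n, θ k ^ 2 := by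
    intro n
    rw [hSfun n, IndepFun.variance_sum (fun k _ => hmem k)
      (fun i _ j _ hij => hindep.indepFun hij)]
    exact Finset.sum_congr rfl fun k _ => hvar k
  have hVbound : ∀ n : ℕ, variance (S n) μ ≤ (n:ℝ) * ((m:ℝ) + n)^2 := by
    intro n
    rw [hSvar n]
    calc ∑ k ∈ Finset.range n, θ k ^ 2 ≤ ∑ _k ∈ Finset.range n, ((m:ℝ)+n)^2 := by
          apply Finset.sum_le_sum
          intro k hk
          have hk' : (k:ℝ) ≤ n := by exact_mod_cast (Finset.mem_range.1 hk).le
          have : θ k ≤ (m:ℝ)+n := by simp only [hθdef]; linarith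
          exact pow_le_pow_left₀ (hθ k).le this 2
      _ = (n:ℝ) * ((m:ℝ)+n)^2 := by
          rw [Finset.sum_const, Finset.card_range, nsmul_eq_mul]
  have hBC : ∀ i : ℕ, ∀ᵐ ω ∂μ, ∀ᶠ j in atTop,
      |S ((j+1)^2) ω - ∑ k ∈ Finset.range ((j+1)^2), θ k| < ((j:ℝ)+1)^4 / ((i:ℝ)+1) := by
    intro i
    set A : ℕ → Set Ω := fun j =>
      {ω | ((j:ℝ)+1)^4 / ((i:ℝ)+1) ≤ |S ((j+1)^2) ω - ∫ ω', S ((j+1)^2) ω' ∂μ|} with hAdef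
    have hAle : ∀ j, μ (A j) ≤ ENNReal.ofReal
        ((((i:ℝ)+1)^2 * ((m:ℝ)+1)^2) * (1/((j:ℝ)+1)^2)) := by
      intro j
      have hc : 0 < ((j:ℝ)+1)^4 / ((i:ℝ)+1) := by positivity
      refine le_trans (meas_ge_le_variance_div_sq (hSmem _) hc) (ENNReal.ofReal_le_ofReal ?_)
      have hj1 : (1:ℝ) ≤ ((j:ℝ)+1)^2 := by nlinarith [Nat.cast_nonneg (α := ℝ) j]
      have h1 : variance (S ((j+1)^2)) μ ≤ ((m:ℝ)+1)^2 * ((j:ℝ)+1)^6 := by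
        refine le_trans (hVbound ((j+1)^2)) ?_
        have hcast : (((j+1)^2 : ℕ):ℝ) = ((j:ℝ)+1)^2 := by push_cast; ring
        rw [hcast]
        have h2 : (m:ℝ) + ((j:ℝ)+1)^2 ≤ ((m:ℝ)+1) * ((j:ℝ)+1)^2 := by nlinarith
        calc ((j:ℝ)+1)^2 * ((m:ℝ) + ((j:ℝ)+1)^2)^2
            ≤ ((j:ℝ)+1)^2 * (((m:ℝ)+1) * ((j:ℝ)+1)^2)^2 := by
              refine mul_le_mul_of_nonneg_left ?_ (by positivity)
              exact pow_le_pow_left₀ (by positivity) h2 2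
          _ = ((m:ℝ)+1)^2 * ((j:ℝ)+1)^6 := by ring
      calc variance (S ((j+1)^2)) μ / (((j:ℝ)+1)^4 / ((i:ℝ)+1))^2
          ≤ (((m:ℝ)+1)^2 * ((j:ℝ)+1)^6) / (((j:ℝ)+1)^4 / ((i:ℝ)+1))^2 :=
            (div_le_div_iff_of_pos_right (by positivity)).2 h1
        _ = (((i:ℝ)+1)^2 * ((m:ℝ)+1)^2) * (1/((j:ℝ)+1)^2) := by
            field_simp
    have hsum : Summable (fun j : ℕ => (((i:ℝ)+1)^2 * ((m:ℝ)+1)^2) * (1/((j:ℝ)+1)^2)) := by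
      apply Summable.mul_left
      have h2 := (summable_nat_add_iff 1).mpr <|
        Real.summable_one_div_nat_pow.mpr (by norm_num : 1 < 2)
      apply h2.congr
      intro j
      push_cast
      ring
    have htsum : (∑' j, μ (A j)) ≠ ⊤ := by
      refine ne_top_of_le_ne_top ?_ (ENNReal.tsum_le_tsum hAle)
      rw [← ENNReal.ofReal_tsum_of_nonneg (fun j => by positivity) hsum]
      exact ENNReal.ofReal_ne_top
    filter_upwards [ae_eventually_notMem htsum] with ω hω
    filter_upwards [hω] with j hj
    simp only [hAdef, Set.mem_setOf_eq, not_le, hSmean] at hj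
    exact hj
  have hpos : ∀ᵐ ω ∂μ, ∀ k, 0 ≤ L k ω :=
    ae_all_iff.2 fun k => (exp_ae_pos (hmeas k) (hθ k) (hlaw k)).mono fun ω h => h.le
  have hBCall : ∀ᵐ ω ∂μ, ∀ i : ℕ, ∀ᶠ j in atTop,
      |S ((j+1)^2) ω - ∑ k ∈ Finset.range ((j+1)^2), θ k| < ((j:ℝ)+1)^4 / ((i:ℝ)+1) :=
    ae_all_iff.2 hBC
  filter_upwards [hpos, hBCall] with ω hω1 hω2
  -- now a deterministic argument
  set ES : ℕ → ℝ := fun n => ∑ k ∈ Finset.range n, θ k with hESdef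
  have hdiff : Tendsto (fun j : ℕ => (S ((j+1)^2) ω - ES ((j+1)^2)) / ((j:ℝ)+1)^4)
      atTop (nhds 0) := by
    rw [NormedAddCommGroup.tendsto_nhds_zero]
    intro ε hε
    obtain ⟨i, hi⟩ := exists_nat_one_div_lt hε
    filter_upwards [hω2 i] with j hj
    have hj4 : (0:ℝ) < ((j:ℝ)+1)^4 := by positivity
    rw [Real.norm_eq_abs, abs_div, abs_of_pos hj4, div_lt_iff₀ hj4]
    calc |S ((j+1)^2) ω - ES ((j+1)^2)| < ((j:ℝ)+1)^4 / ((i:ℝ)+1) := hj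
      _ = (1/((i:ℝ)+1)) * ((j:ℝ)+1)^4 := by ring
      _ ≤ ε * ((j:ℝ)+1)^4 := mul_le_mul_of_nonneg_right hi.le hj4.le
  have hES4 : Tendsto (fun j : ℕ => ES ((j+1)^2) / ((j:ℝ)+1)^4) atTop (nhds (1/2)) := by
    have hN : Tendsto (fun j : ℕ => (j+1)^2) atTop atTop := by
      apply tendsto_atTop_atTop.2; intro b; exact ⟨b, fun n hn => by nlinarith⟩
    have h := (ES_div_tendsto m).comp hN
    apply h.congr
    intro j
    simp only [Function.comp_apply]
    have hc : (((j+1)^2 : ℕ):ℝ) = ((j:ℝ)+1)^2 := by push_cast; ring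
    rw [hc, ← pow_mul]
  have hS4 : Tendsto (fun j : ℕ => S ((j+1)^2) ω / ((j:ℝ)+1)^4) atTop (nhds (1/2)) := by
    have h := hdiff.add hES4
    rw [zero_add] at h
    apply h.congr
    intro j
    rw [← add_div, sub_add_cancel]
  have hSnonneg : ∀ n, 0 ≤ S n ω := fun n => Finset.sum_nonneg fun k _ => hω1 k
  have hmono : ∀ a b : ℕ, a ≤ b → S a ω ≤ S b ω := by
    intro a b hab
    exact Finset.sum_le_sum_of_subset_of_nonneg (Finset.range_subset_range.2 hab)
      (fun k _ _ => hω1 k)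
  have hmain : Tendsto (fun n : ℕ => S n ω / (n:ℝ)^2) atTop (nhds (1/2)) := by
    set φ : ℕ → ℝ := fun j => S ((j+1)^2) ω / ((j:ℝ)+1)^4 with hφdef
    have hratio : Tendsto (fun j : ℕ => ((j:ℝ)^4 / ((j:ℝ)+1)^4)) atTop (nhds 1) := by
      have h := ratio_tendsto.pow 4
      rw [one_pow] at h
      exact h.congr fun j => (div_pow _ _ _)
    have hratio' : Tendsto (fun j : ℕ => (((j:ℝ)+1)^4 / (j:ℝ)^4)) atTop (nhds 1) := by
      have h := ratio_tendsto'.pow 4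
      rw [one_pow] at h
      exact h.congr fun j => (div_pow _ _ _)
    have hlow0 : Tendsto (fun j : ℕ => φ (j-1) * ((j:ℝ)^4 / ((j:ℝ)+1)^4))
        atTop (nhds (1/2)) := by
      have h1 : Tendsto (fun j : ℕ => φ (j-1)) atTop (nhds (1/2)) :=
        hS4.comp (tendsto_sub_atTop_nat 1)
      have h := h1.mul hratio
      rwa [mul_one] at h
    have hup0 : Tendsto (fun j : ℕ => φ j * (((j:ℝ)+1)^4 / (j:ℝ)^4))
        atTop (nhds (1/2)) := by
      have h := hS4.mul hratio'
      rwa [mul_one] at h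
    refine tendsto_of_tendsto_of_tendsto_of_le_of_le' (hlow0.comp sqrt_tendsto)
      (hup0.comp sqrt_tendsto) ?_ ?_
    · filter_upwards [eventually_ge_atTop 1] with n hn
      simp only [Function.comp_apply]
      set j := Nat.sqrt n with hjdef
      have hj1 : 1 ≤ j := by
        rw [hjdef]
        exact Nat.sqrt_pos.2 (by omega)
      have hjn : j^2 ≤ n := Nat.sqrt_le' n
      have hjR : (1:ℝ) ≤ (j:ℝ) := by exact_mod_cast hj1
      have hnR : (1:ℝ) ≤ (n:ℝ) := by exact_mod_cast hn
      have hidx : (j - 1) + 1 = j := by omega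
      have hcast : ((j-1:ℕ):ℝ) + 1 = (j:ℝ) := by
        have : (((j-1)+1:ℕ):ℝ) = (j:ℝ) := by exact_mod_cast congrArg (Nat.cast (R := ℝ)) hidx
        push_cast at this
        linarith
      have hφeq : φ (j-1) = S (j^2) ω / (j:ℝ)^4 := by
        simp only [hφdef, hidx, hcast]
      rw [hφeq]
      have hne : ((j:ℝ))^4 ≠ 0 := by positivity
      rw [div_mul_div_comm, mul_comm (S (j^2) ω), mul_div_mul_left _ _ hne]
      refine div_le_div₀ (hSnonneg n) (hmono _ _ hjn) (by positivity) ?_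
      have h1 : (n:ℝ) ≤ ((j:ℝ)+1)^2 := by
        have := (Nat.lt_succ_sqrt' n).le
        have h2 : (n:ℝ) ≤ ((j+1:ℕ):ℝ)^2 := by exact_mod_cast this
        push_cast at h2
        linarith
      calc (n:ℝ)^2 ≤ (((j:ℝ)+1)^2)^2 := pow_le_pow_left₀ (by positivity) h1 2
        _ = ((j:ℝ)+1)^4 := by ring
    · filter_upwards [eventually_ge_atTop 1] with n hn
      simp only [Function.comp_apply]
      set j := Nat.sqrt n with hjdef
      have hj1 : 1 ≤ j := by
        rw [hjdef]
        exact Nat.sqrt_pos.2 (by omega)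
      have hjn : j^2 ≤ n := Nat.sqrt_le' n
      have hjR : (1:ℝ) ≤ (j:ℝ) := by exact_mod_cast hj1
      have hφeq : φ j = S ((j+1)^2) ω / ((j:ℝ)+1)^4 := rfl
      rw [hφeq]
      have hne : (((j:ℝ))+1)^4 ≠ 0 := by positivity
      rw [div_mul_div_comm, mul_comm (S ((j+1)^2) ω), mul_div_mul_left _ _ hne]
      refine div_le_div₀ (hSnonneg _) (hmono _ _ (Nat.lt_succ_sqrt' n).le) (by positivity) ?_
      have h1 : (j:ℝ)^2 ≤ (n:ℝ) := by exact_mod_cast hjn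
      calc ((j:ℝ))^4 = ((j:ℝ)^2)^2 := by ring
        _ ≤ (n:ℝ)^2 := pow_le_pow_left₀ (by positivity) h1 2
  have hfin1 : Tendsto (fun n : ℕ => S (n-1) ω / ((n-1:ℕ):ℝ)^2) atTop (nhds (1/2)) :=
    hmain.comp (tendsto_sub_atTop_nat 1)
  have hfin2 : Tendsto (fun n : ℕ => ((n-1:ℕ):ℝ)^2/(n:ℝ)^2) atTop (nhds 1) := by
    have h := pred_ratio_tendsto.pow 2
    rw [one_pow] at h
    exact h.congr fun n => (div_pow _ _ _)
  have h := hfin1.mul hfin2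
  rw [mul_one] at h
  apply h.congr'
  filter_upwards [eventually_ge_atTop 2] with n hn
  have hne : ((n-1:ℕ):ℝ) ≠ 0 := Nat.cast_ne_zero.2 (by omega)
  show S (n-1) ω / ((n-1:ℕ):ℝ)^2 * (((n-1:ℕ):ℝ)^2/(n:ℝ)^2)
      = (∑ k ∈ Finset.range (n - 1), L k ω) / (n : ℝ) ^ 2
  have hrw : (∑ k ∈ Finset.range (n - 1), L k ω) = S (n-1) ω := rfl
  rw [hrw, div_mul_div_comm, mul_comm (S (n-1) ω), mul_div_mul_left _ _ (pow_ne_zero 2 hne)]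
end

section
/- Consider the recursion a_{n+1} = α_n a_n + β_n/(n−1) for n ≥ i, with a_i = m, where α_n = ∏_{j=0}^{m-1}(1 − 1/((n−1)(j + m(2n−1)))) and β_n = 1 + ∑_{k=1}^{m-1} ∏_{j=m-k}^{m-1}(1 − 1/((n−1)(j + m(2n−1)))). Then a_n / (m log n) → 1 as n → ∞. -/
open Finset Filter Real

noncomputable def dpA (m n : ℕ) : ℝ :=
  ∏ j ∈ Finset.range m, (1 - 1 / (((n : ℝ) - 1) * ((j : ℝ) + (m : ℝ) * (2 * (n : ℝ) - 1))))

noncomputable def dpB (m n : ℕ) : ℝ :=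
  1 + ∑ k ∈ Finset.Icc 1 (m - 1), ∏ j ∈ Finset.Icc (m - k) (m - 1),
      (1 - 1 / (((n : ℝ) - 1) * ((j : ℝ) + (m : ℝ) * (2 * (n : ℝ) - 1))))

noncomputable def dpC (n : ℕ) : ℝ := 1 / (((n : ℝ) - 1) * (2 * (n : ℝ) - 1))

lemma dpDen3 {m n : ℕ} (hm : 1 ≤ m) (hn : 2 ≤ n) {j : ℝ} (hj : 0 ≤ j) :
    (3:ℝ) ≤ ((n : ℝ) - 1) * (j + (m : ℝ) * (2 * (n : ℝ) - 1)) := by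
  have h2 : (2 : ℝ) ≤ (n : ℝ) := by exact_mod_cast hn
  have hm' : (1 : ℝ) ≤ (m : ℝ) := by exact_mod_cast hm
  have hM : (3:ℝ) ≤ (m : ℝ) * (2 * (n : ℝ) - 1) := by
    nlinarith [mul_nonneg (by linarith : (0:ℝ) ≤ (m:ℝ) - 1) (by linarith : (0:ℝ) ≤ 2 * (n:ℝ) - 1)]
  have := mul_le_mul (by linarith : (1:ℝ) ≤ (n:ℝ) - 1) (by linarith : (3:ℝ) ≤ j + (m : ℝ) * (2 * (n : ℝ) - 1)) (by norm_num) (by linarith)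
  linarith

lemma dpDen3' {m n : ℕ} (hm : 1 ≤ m) (hn : 2 ≤ n) :
    (3:ℝ) ≤ ((n : ℝ) - 1) * ((m : ℝ) * (2 * (n : ℝ) - 1)) := by
  have := dpDen3 hm hn (j := 0) le_rfl
  simpa using this

lemma dpC_nonneg {n : ℕ} (hn : 2 ≤ n) : 0 ≤ dpC n := by
  have h2 : (2 : ℝ) ≤ (n : ℝ) := by exact_mod_cast hn
  have h : (0:ℝ) < ((n : ℝ) - 1) * (2 * (n : ℝ) - 1) := by nlinarith
  exact le_of_lt (one_div_pos.2 h)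

lemma dpC_le_one {n : ℕ} (hn : 2 ≤ n) : dpC n ≤ 1 := by
  have h2 : (2 : ℝ) ≤ (n : ℝ) := by exact_mod_cast hn
  have h : (1:ℝ) ≤ ((n : ℝ) - 1) * (2 * (n : ℝ) - 1) := by nlinarith
  unfold dpC
  rw [div_le_one (by linarith)]; linarith

-- factor bounds
lemma dpFactor_bounds {m n : ℕ} (hm : 1 ≤ m) (hn : 2 ≤ n) (j : ℕ) :
    1 - 1 / (((n : ℝ) - 1) * ((m : ℝ) * (2 * (n : ℝ) - 1)))
      ≤ 1 - 1 / (((n : ℝ) - 1) * ((j : ℝ) + (m : ℝ) * (2 * (n : ℝ) - 1))) ∧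
    1 - 1 / (((n : ℝ) - 1) * ((j : ℝ) + (m : ℝ) * (2 * (n : ℝ) - 1))) ≤ 1 := by
  have h2 : (2 : ℝ) ≤ (n : ℝ) := by exact_mod_cast hn
  have hj : (0 : ℝ) ≤ (j : ℝ) := Nat.cast_nonneg j
  have hD := dpDen3 hm hn hj
  have hD' := dpDen3' hm hn
  constructor
  · have : 1 / (((n : ℝ) - 1) * ((j : ℝ) + (m : ℝ) * (2 * (n : ℝ) - 1)))
        ≤ 1 / (((n : ℝ) - 1) * ((m : ℝ) * (2 * (n : ℝ) - 1))) := by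
      apply one_div_le_one_div_of_le (by linarith)
      have hm' : (1 : ℝ) ≤ (m : ℝ) := by exact_mod_cast hm
      nlinarith
    linarith
  · have : (0:ℝ) ≤ 1 / (((n : ℝ) - 1) * ((j : ℝ) + (m : ℝ) * (2 * (n : ℝ) - 1))) := by
      apply le_of_lt; apply one_div_pos.2; linarith
    linarith

lemma dpFactor_nonneg {m n : ℕ} (hm : 1 ≤ m) (hn : 2 ≤ n) (j : ℕ) :
    0 ≤ 1 - 1 / (((n : ℝ) - 1) * ((j : ℝ) + (m : ℝ) * (2 * (n : ℝ) - 1))) := by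
  have hj : (0 : ℝ) ≤ (j : ℝ) := Nat.cast_nonneg j
  have hD := dpDen3 hm hn hj
  have : 1 / (((n : ℝ) - 1) * ((j : ℝ) + (m : ℝ) * (2 * (n : ℝ) - 1))) ≤ 1 := by
    rw [div_le_one (by linarith)]; linarith
  linarith

lemma dp_ms_eq {m n : ℕ} (hm : 1 ≤ m) (hn : 2 ≤ n) :
    (m : ℝ) * (1 / (((n : ℝ) - 1) * ((m : ℝ) * (2 * (n : ℝ) - 1)))) = dpC n := by
  have h2 : (2 : ℝ) ≤ (n : ℝ) := by exact_mod_cast hn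
  have hm' : (1 : ℝ) ≤ (m : ℝ) := by exact_mod_cast hm
  have hN1 : ((n : ℝ) - 1) ≠ 0 := ne_of_gt (by linarith : (0:ℝ) < (n:ℝ) - 1)
  have h2n : (2 * (n : ℝ) - 1) ≠ 0 := by intro h; nlinarith
  have hmne : (m : ℝ) ≠ 0 := by intro h; rw [h] at hm'; linarith
  unfold dpC
  field_simp

lemma dp_pow_ge {m n : ℕ} (hm : 1 ≤ m) (hn : 2 ≤ n) (k : ℕ) (hk : k ≤ m) :
    1 - dpC n ≤ (1 - 1 / (((n : ℝ) - 1) * ((m : ℝ) * (2 * (n : ℝ) - 1)))) ^ k := by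
  set s : ℝ := 1 / (((n : ℝ) - 1) * ((m : ℝ) * (2 * (n : ℝ) - 1))) with hs
  have hD' := dpDen3' hm hn
  have hs0 : 0 ≤ s := by rw [hs]; apply le_of_lt; apply one_div_pos.2; linarith
  have hs1 : s ≤ 1 := by rw [hs, div_le_one (by linarith)]; linarith
  have h1 : 1 - (k:ℝ) * s ≤ (1 - s) ^ k := by
    have := one_add_mul_le_pow (a := -s) (by linarith) k
    simpa [sub_eq_add_neg, mul_neg] using this
  have h2' : 1 - dpC n ≤ 1 - (k:ℝ) * s := by
    have hkm : (k:ℝ) ≤ (m:ℝ) := by exact_mod_cast hk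
    have : (k:ℝ) * s ≤ (m:ℝ) * s := mul_le_mul_of_nonneg_right hkm hs0
    rw [← dp_ms_eq hm hn]
    linarith
  linarith

lemma dp_s_le_one {m n : ℕ} (hm : 1 ≤ m) (hn : 2 ≤ n) :
    1 / (((n : ℝ) - 1) * ((m : ℝ) * (2 * (n : ℝ) - 1))) ≤ 1 := by
  have hD' := dpDen3' hm hn
  rw [div_le_one (by linarith)]; linarith

lemma dpA_bounds {m n : ℕ} (hm : 1 ≤ m) (hn : 2 ≤ n) :
    1 - dpC n ≤ dpA m n ∧ dpA m n ≤ 1 := by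
  constructor
  · calc 1 - dpC n ≤ (1 - 1 / (((n : ℝ) - 1) * ((m : ℝ) * (2 * (n : ℝ) - 1)))) ^ m :=
          dp_pow_ge hm hn m le_rfl
      _ = ∏ _j ∈ Finset.range m, (1 - 1 / (((n : ℝ) - 1) * ((m : ℝ) * (2 * (n : ℝ) - 1)))) := by
          rw [Finset.prod_const, Finset.card_range]
      _ ≤ dpA m n := by
          apply Finset.prod_le_prod
          · intro j _
            have := dp_s_le_one hm hn
            linarith
          · intro j _
            exact (dpFactor_bounds hm hn j).1
  · apply Finset.prod_le_one
    · intro j _; exact dpFactor_nonneg hm hn j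
    · intro j _; exact (dpFactor_bounds hm hn j).2

lemma dpA_nonneg {m n : ℕ} (hm : 1 ≤ m) (hn : 2 ≤ n) : 0 ≤ dpA m n :=
  Finset.prod_nonneg fun j _ => dpFactor_nonneg hm hn j

lemma dpB_bounds {m n : ℕ} (hm : 1 ≤ m) (hn : 2 ≤ n) :
    (m : ℝ) - (m : ℝ) * dpC n ≤ dpB m n ∧ dpB m n ≤ (m : ℝ) := by
  have hm' : (1 : ℝ) ≤ (m : ℝ) := by exact_mod_cast hm
  have hcard : (Finset.Icc 1 (m - 1)).card = m - 1 := by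
    rw [Nat.card_Icc]; omega
  have hc0 : 0 ≤ dpC n := dpC_nonneg hn
  have hc1 : dpC n ≤ 1 := dpC_le_one hn
  have hcast : ((m - 1 : ℕ) : ℝ) = (m : ℝ) - 1 := by
    have h1 : (1:ℕ) ≤ m := hm
    push_cast [h1]; ring
  constructor
  · have hterm : ∀ k ∈ Finset.Icc 1 (m - 1),
        (1 : ℝ) - dpC n ≤ ∏ j ∈ Finset.Icc (m - k) (m - 1),
          (1 - 1 / (((n : ℝ) - 1) * ((j : ℝ) + (m : ℝ) * (2 * (n : ℝ) - 1)))) := by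
      intro k hk
      have hkcard : (Finset.Icc (m - k) (m - 1)).card ≤ m := by
        rw [Nat.card_Icc]; omega
      calc (1:ℝ) - dpC n
          ≤ (1 - 1 / (((n : ℝ) - 1) * ((m : ℝ) * (2 * (n : ℝ) - 1)))) ^
              (Finset.Icc (m - k) (m - 1)).card := dp_pow_ge hm hn _ hkcard
        _ = ∏ _j ∈ Finset.Icc (m - k) (m - 1),
              (1 - 1 / (((n : ℝ) - 1) * ((m : ℝ) * (2 * (n : ℝ) - 1)))) := by
            rw [Finset.prod_const]
        _ ≤ _ := by
            apply Finset.prod_le_prod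
            · intro j _
              have := dp_s_le_one hm hn
              linarith
            · intro j _; exact (dpFactor_bounds hm hn j).1
    have hsum : ((m:ℝ) - 1) * (1 - dpC n) ≤ ∑ k ∈ Finset.Icc 1 (m - 1),
        ∏ j ∈ Finset.Icc (m - k) (m - 1),
          (1 - 1 / (((n : ℝ) - 1) * ((j : ℝ) + (m : ℝ) * (2 * (n : ℝ) - 1)))) := by
      have := Finset.card_nsmul_le_sum (Finset.Icc 1 (m-1)) _ _ hterm
      rw [hcard] at this
      simpa [nsmul_eq_mul, hcast] using this
    unfold dpB
    nlinarith [hc0, hm']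
  · unfold dpB
    have hterm : ∀ k ∈ Finset.Icc 1 (m - 1),
        ∏ j ∈ Finset.Icc (m - k) (m - 1),
          (1 - 1 / (((n : ℝ) - 1) * ((j : ℝ) + (m : ℝ) * (2 * (n : ℝ) - 1)))) ≤ 1 := by
      intro k _
      apply Finset.prod_le_one
      · intro j _; exact dpFactor_nonneg hm hn j
      · intro j _; exact (dpFactor_bounds hm hn j).2
    have := Finset.sum_le_card_nsmul (Finset.Icc 1 (m-1)) _ 1 hterm
    rw [hcard] at this
    simp only [nsmul_eq_mul, mul_one] at this
    rw [hcast] at this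
    linarith

lemma dpB_pos {m n : ℕ} (hm : 1 ≤ m) (hn : 2 ≤ n) : 0 ≤ dpB m n := by
  have hm' : (1 : ℝ) ≤ (m : ℝ) := by exact_mod_cast hm
  have := (dpB_bounds hm hn).1
  have hc1 : dpC n ≤ 1 := dpC_le_one hn
  have hc0 : 0 ≤ dpC n := dpC_nonneg hn
  nlinarith

noncomputable def dpH (i n : ℕ) : ℝ := ∑ k ∈ Finset.Ico i n, 1 / ((k:ℝ) - 1)

lemma dpH_succ {i n : ℕ} (h : i ≤ n) : dpH i (n+1) = dpH i n + 1 / ((n:ℝ) - 1) := by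
  unfold dpH
  rw [Finset.sum_Ico_succ_top h]

-- log increments
lemma dp_log_inc_le {x : ℝ} (hx : 2 ≤ x) :
    Real.log x - Real.log (x - 1) ≤ 1 / (x - 1) := by
  have h1 : (0:ℝ) < x - 1 := by linarith
  have h0 : (0:ℝ) < x := by linarith
  have : Real.log (x / (x - 1)) ≤ x / (x - 1) - 1 :=
    Real.log_le_sub_one_of_pos (by positivity)
  rw [Real.log_div (by linarith) (by linarith)] at this
  have hx1 : x / (x - 1) - 1 = 1 / (x - 1) := by field_simp; ring
  linarith [this, hx1.le, hx1.ge]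

lemma dp_log_inc_ge {x : ℝ} (hx : 2 ≤ x) :
    1 / x ≤ Real.log x - Real.log (x - 1) := by
  have h1 : (0:ℝ) < x - 1 := by linarith
  have h0 : (0:ℝ) < x := by linarith
  have : Real.log ((x - 1) / x) ≤ (x - 1) / x - 1 :=
    Real.log_le_sub_one_of_pos (by positivity)
  rw [Real.log_div (by linarith) (by linarith)] at this
  have hx1 : (x - 1) / x - 1 = -(1 / x) := by field_simp; ring
  linarith

lemma dpH_bounds {i : ℕ} (hi : 2 ≤ i) : ∀ n : ℕ, i ≤ n →
    Real.log ((n:ℝ) - 1) - Real.log ((i:ℝ) - 1) ≤ dpH i n ∧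
    dpH i n ≤ Real.log ((n:ℝ) - 1) - Real.log ((i:ℝ) - 1) + (1 / ((i:ℝ) - 1) - 1 / ((n:ℝ) - 1)) := by
  intro n hn
  induction n, hn using Nat.le_induction with
  | base =>
    unfold dpH
    simp
  | succ n hn ih =>
    have h2n : (2:ℝ) ≤ (n:ℝ) := by exact_mod_cast le_trans hi hn
    have hcast : ((n + 1 : ℕ) : ℝ) - 1 = (n : ℝ) := by push_cast; ring
    have hinc1 := dp_log_inc_le (x := (n:ℝ)) h2n
    have hinc2 := dp_log_inc_ge (x := (n:ℝ)) h2n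
    rw [dpH_succ hn, hcast]
    have hlog : Real.log ((n:ℝ)) - Real.log ((n:ℝ) - 1) ≤ 1 / ((n:ℝ) - 1) := hinc1
    constructor
    · linarith [ih.1]
    · have h1n : 1 / (n:ℝ) ≤ Real.log (n:ℝ) - Real.log ((n:ℝ) - 1) := hinc2
      linarith [ih.2]

-- the error dominating function
noncomputable def dpG (m n : ℕ) : ℝ := (m:ℝ) * (4 * (n:ℝ) ^ (-(3:ℝ)/2) + 6 * (n:ℝ) ^ (-(2:ℝ)))

lemma dpG_nonneg (m n : ℕ) : 0 ≤ dpG m n := by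
  unfold dpG
  have h1 : (0:ℝ) ≤ (n:ℝ) ^ (-(3:ℝ)/2) := Real.rpow_nonneg (Nat.cast_nonneg n) _
  have h2 : (0:ℝ) ≤ (n:ℝ) ^ (-(2:ℝ)) := Real.rpow_nonneg (Nat.cast_nonneg n) _
  positivity

lemma dpG_summable (m : ℕ) : Summable (fun n : ℕ => dpG m n) := by
  unfold dpG
  apply Summable.mul_left
  apply Summable.add
  · exact (Real.summable_nat_rpow.2 (by norm_num)).mul_left 4
  · exact (Real.summable_nat_rpow.2 (by norm_num)).mul_left 6

-- rpow rewriting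
lemma dp_rpow32 {n : ℕ} (hn : 2 ≤ n) : (n:ℝ) ^ (-(3:ℝ)/2) = Real.sqrt n / (n:ℝ)^2 := by
  have h0 : (0:ℝ) < (n:ℝ) := by exact_mod_cast Nat.lt_of_lt_of_le Nat.zero_lt_two hn
  rw [show (-(3:ℝ)/2) = 1/2 + (-2 : ℝ) by norm_num, Real.rpow_add h0, ← Real.sqrt_eq_rpow,
    show ((-2:ℝ)) = -((2:ℕ):ℝ) by norm_num, Real.rpow_neg h0.le, Real.rpow_natCast]
  field_simp

lemma dp_rpow2 {n : ℕ} (hn : 2 ≤ n) : (n:ℝ) ^ (-(2:ℝ)) = 1 / (n:ℝ)^2 := by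
  have h0 : (0:ℝ) < (n:ℝ) := by exact_mod_cast Nat.lt_of_lt_of_le Nat.zero_lt_two hn
  rw [show ((-2:ℝ)) = -((2:ℕ):ℝ) by norm_num, Real.rpow_neg h0.le, Real.rpow_natCast]
  field_simp

lemma dp_log_le_sqrt {x : ℝ} (hx : 1 ≤ x) : Real.log x ≤ 2 * Real.sqrt x := by
  have h0 : (0:ℝ) < x := by linarith
  have hs : (0:ℝ) < Real.sqrt x := Real.sqrt_pos.2 h0
  have := Real.log_le_sub_one_of_pos hs
  have hls : Real.log (Real.sqrt x) = Real.log x / 2 := Real.log_sqrt h0.le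
  rw [hls] at this
  linarith

/-- Consider the recursion `a_{n+1} = α_n a_n + β_n/(n-1)` for `n ≥ i`, with `a_i = m`, where
`α_n = ∏_{j=0}^{m-1} (1 - 1/((n-1)(j + m(2n-1))))` and
`β_n = 1 + ∑_{k=1}^{m-1} ∏_{j=m-k}^{m-1} (1 - 1/((n-1)(j + m(2n-1))))`.
Then `a_n / (m log n) → 1` as `n → ∞`. -/
theorem depref_linear_mean_recursion (m i : ℕ) (hm : 1 ≤ m) (hi : 2 ≤ i)
    (a : ℕ → ℝ) (ha : a i = (m : ℝ))
    (hrec : ∀ n : ℕ, i ≤ n →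
      a (n + 1) =
        (∏ j ∈ Finset.range m,
            (1 - 1 / (((n : ℝ) - 1) * ((j : ℝ) + (m : ℝ) * (2 * (n : ℝ) - 1))))) * a n +
        (1 + ∑ k ∈ Finset.Icc 1 (m - 1),
            ∏ j ∈ Finset.Icc (m - k) (m - 1),
              (1 - 1 / (((n : ℝ) - 1) * ((j : ℝ) + (m : ℝ) * (2 * (n : ℝ) - 1))))) /
          ((n : ℝ) - 1)) :
    Filter.Tendsto (fun n : ℕ => a n / ((m : ℝ) * Real.log n)) Filter.atTop (nhds 1) := by
  have hrec' : ∀ n : ℕ, i ≤ n → a (n + 1) = dpA m n * a n + dpB m n / ((n : ℝ) - 1) := by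
    intro n hn; unfold dpA dpB; exact hrec n hn
  have hm' : (1:ℝ) ≤ (m:ℝ) := by exact_mod_cast hm
  have hi' : (2:ℝ) ≤ (i:ℝ) := by exact_mod_cast hi
  have h2 : ∀ n : ℕ, i ≤ n → 2 ≤ n := fun n hn => le_trans hi hn
  have h2r : ∀ n : ℕ, i ≤ n → (2:ℝ) ≤ (n:ℝ) := by
    intro n hn; exact_mod_cast h2 n hn
  -- nonnegativity
  have anonneg : ∀ n : ℕ, i ≤ n → 0 ≤ a n := by
    intro n hn
    induction n, hn using Nat.le_induction with
    | base => rw [ha]; positivity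
    | succ n hn ih =>
      rw [hrec' n hn]
      have h1 := dpA_nonneg hm (h2 n hn)
      have h3 := dpB_pos hm (h2 n hn)
      have h4 : (0:ℝ) < (n:ℝ) - 1 := by linarith [h2r n hn]
      have := mul_nonneg h1 ih
      have := div_nonneg h3 h4.le
      linarith
  -- upper bound
  have aUB : ∀ n : ℕ, i ≤ n → a n ≤ (m:ℝ) + (m:ℝ) * dpH i n := by
    intro n hn
    induction n, hn using Nat.le_induction with
    | base => rw [ha]; unfold dpH; simp
    | succ n hn ih =>
      rw [hrec' n hn, dpH_succ hn]
      have hA := (dpA_bounds hm (h2 n hn)).2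
      have hB := (dpB_bounds hm (h2 n hn)).2
      have h4 : (0:ℝ) < (n:ℝ) - 1 := by linarith [h2r n hn]
      have e1 : dpA m n * a n ≤ a n := by
        nlinarith [anonneg n hn]
      have e2 : dpB m n / ((n:ℝ) - 1) ≤ (m:ℝ) / ((n:ℝ) - 1) := by gcongr
      have e3 : (m:ℝ) / ((n:ℝ) - 1) = (m:ℝ) * (1 / ((n:ℝ) - 1)) := by ring
      nlinarith
  -- the per-step error bound
  have errstep : ∀ n : ℕ, i ≤ n →
      dpC n * a n + (m:ℝ) * dpC n / ((n:ℝ) - 1) ≤ dpG m n := by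
    intro n hn
    have h2n := h2 n hn
    have h2nr := h2r n hn
    have h4 : (1:ℝ) ≤ (n:ℝ) - 1 := by linarith
    have hc0 := dpC_nonneg h2n
    -- dpC n ≤ 2 / n²
    have hc2 : dpC n ≤ 2 / (n:ℝ)^2 := by
      unfold dpC
      rw [div_le_div_iff₀ (by nlinarith) (by positivity)]
      nlinarith
    -- a n ≤ m (2√n + 2)
    have hsq : (0:ℝ) ≤ Real.sqrt n := Real.sqrt_nonneg _
    have hH : dpH i n ≤ 2 * Real.sqrt n + 1 := by
      have hub := (dpH_bounds hi n hn).2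
      have hl1 : (0:ℝ) ≤ Real.log ((i:ℝ) - 1) := Real.log_nonneg (by linarith)
      have hl2 : 1 / ((i:ℝ) - 1) ≤ 1 := by
        rw [div_le_one (by linarith)]; linarith
      have hl3 : Real.log ((n:ℝ) - 1) ≤ Real.log (n:ℝ) :=
        Real.log_le_log (by linarith) (by linarith)
      have hl4 : Real.log (n:ℝ) ≤ 2 * Real.sqrt n := dp_log_le_sqrt (by linarith)
      have hl5 : (0:ℝ) ≤ 1 / ((n:ℝ) - 1) := by positivity
      linarith
    have han : a n ≤ (m:ℝ) * (2 * Real.sqrt n + 2) := by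
      have := aUB n hn
      nlinarith
    have hfrac : (m:ℝ) * dpC n / ((n:ℝ) - 1) ≤ (m:ℝ) * dpC n := by
      have hnum : (0:ℝ) ≤ (m:ℝ) * dpC n := by positivity
      calc (m:ℝ) * dpC n / ((n:ℝ) - 1) ≤ (m:ℝ) * dpC n / 1 := by gcongr
        _ = (m:ℝ) * dpC n := by ring
    have key : dpC n * a n + (m:ℝ) * dpC n ≤ 2 / (n:ℝ)^2 * ((m:ℝ) * (2 * Real.sqrt n + 3)) := by
      have e1 : dpC n * a n ≤ dpC n * ((m:ℝ) * (2 * Real.sqrt n + 2)) :=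
        mul_le_mul_of_nonneg_left (by linarith [han, anonneg n hn]) hc0
      have e2 : (0:ℝ) ≤ (m:ℝ) * (2 * Real.sqrt n + 3) := by positivity
      nlinarith
    have hGeq : dpG m n = 2 / (n:ℝ)^2 * ((m:ℝ) * (2 * Real.sqrt n + 3)) := by
      unfold dpG
      rw [dp_rpow32 h2n, dp_rpow2 h2n]
      have hne : ((n:ℝ))^2 ≠ 0 := by positivity
      field_simp
      ring
    rw [hGeq]
    linarith
  -- lower bound
  have aLB : ∀ n : ℕ, i ≤ n →
      (m:ℝ) + (m:ℝ) * dpH i n - (∑ k ∈ Finset.Ico i n, dpG m k) ≤ a n := by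
    intro n hn
    induction n, hn using Nat.le_induction with
    | base => rw [ha]; unfold dpH; simp
    | succ n hn ih =>
      rw [hrec' n hn, dpH_succ hn, Finset.sum_Ico_succ_top hn]
      have hA := (dpA_bounds hm (h2 n hn)).1
      have hB := (dpB_bounds hm (h2 n hn)).1
      have h4 : (0:ℝ) < (n:ℝ) - 1 := by linarith [h2r n hn]
      have hc0 := dpC_nonneg (h2 n hn)
      have e1 : (1 - dpC n) * a n ≤ dpA m n * a n :=
        mul_le_mul_of_nonneg_right hA (anonneg n hn)
      have e2 : ((m:ℝ) - (m:ℝ) * dpC n) / ((n:ℝ) - 1) ≤ dpB m n / ((n:ℝ) - 1) := by gcongr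
      have e3 : ((m:ℝ) - (m:ℝ) * dpC n) / ((n:ℝ) - 1)
          = (m:ℝ) * (1 / ((n:ℝ) - 1)) - (m:ℝ) * dpC n / ((n:ℝ) - 1) := by ring
      have e4 := errstep n hn
      nlinarith
  -- sums of dpG are bounded by its tsum
  set S : ℝ := ∑' k : ℕ, dpG m k with hS
  have hsumle : ∀ n : ℕ, ∑ k ∈ Finset.Ico i n, dpG m k ≤ S := by
    intro n
    exact Summable.sum_le_tsum _ (fun k _ => dpG_nonneg m k) (dpG_summable m)
  have hS0 : 0 ≤ S := tsum_nonneg (fun k => dpG_nonneg m k)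
  -- global bound on |a n - m log n|
  set C : ℝ := (m:ℝ) * Real.log ((i:ℝ) - 1) + S + 2 * (m:ℝ) + (m:ℝ) with hC
  have habs : ∀ n : ℕ, i ≤ n → |a n - (m:ℝ) * Real.log n| ≤ C := by
    intro n hn
    have h2nr := h2r n hn
    have hHb := dpH_bounds hi n hn
    have hlog1 : Real.log ((n:ℝ) - 1) ≤ Real.log (n:ℝ) :=
      Real.log_le_log (by linarith) (by linarith)
    have hlog2 : Real.log (n:ℝ) - Real.log ((n:ℝ) - 1) ≤ 1 / ((n:ℝ) - 1) :=
      dp_log_inc_le h2nr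
    have hfrac : 1 / ((n:ℝ) - 1) ≤ 1 := by
      rw [div_le_one (by linarith)]; linarith
    have hfrac2 : 1 / ((i:ℝ) - 1) ≤ 1 := by
      rw [div_le_one (by linarith)]; linarith
    have hfrac3 : (0:ℝ) ≤ 1 / ((n:ℝ) - 1) := le_of_lt (one_div_pos.2 (by linarith))
    have hli : (0:ℝ) ≤ Real.log ((i:ℝ) - 1) := Real.log_nonneg (by linarith)
    have hm0 : (0:ℝ) ≤ (m:ℝ) := by linarith
    have hub : a n ≤ (m:ℝ) * Real.log n + 2 * (m:ℝ) := by
      have hH2 : dpH i n ≤ Real.log n + 1 := by linarith [hHb.2]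
      have h7 := mul_le_mul_of_nonneg_left hH2 hm0
      have h8 : (m:ℝ) * (Real.log n + 1) = (m:ℝ) * Real.log n + (m:ℝ) := by ring
      linarith [aUB n hn]
    have hlb : (m:ℝ) * Real.log n - ((m:ℝ) * Real.log ((i:ℝ) - 1) + S + 2 * (m:ℝ)) ≤ a n := by
      have hH3 : Real.log n - 1 - Real.log ((i:ℝ) - 1) ≤ dpH i n := by linarith [hHb.1]
      have h7 := mul_le_mul_of_nonneg_left hH3 hm0
      have h8 : (m:ℝ) * (Real.log n - 1 - Real.log ((i:ℝ) - 1))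
          = (m:ℝ) * Real.log n - (m:ℝ) - (m:ℝ) * Real.log ((i:ℝ) - 1) := by ring
      linarith [aLB n hn, hsumle n]
    rw [abs_le]
    have hmli : (0:ℝ) ≤ (m:ℝ) * Real.log ((i:ℝ) - 1) := mul_nonneg hm0 hli
    constructor
    · rw [hC]; linarith
    · rw [hC]; linarith
  -- conclude
  have hLtend : Filter.Tendsto (fun n : ℕ => (m:ℝ) * Real.log n) Filter.atTop Filter.atTop := by
    apply Filter.Tendsto.const_mul_atTop (by linarith : (0:ℝ) < (m:ℝ))
    exact Real.tendsto_log_atTop.comp tendsto_natCast_atTop_atTop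
  have hCtend : Filter.Tendsto (fun n : ℕ => C / ((m:ℝ) * Real.log n)) Filter.atTop (nhds 0) :=
    Filter.Tendsto.div_atTop tendsto_const_nhds hLtend
  have hsqueeze : Filter.Tendsto (fun n : ℕ => a n / ((m:ℝ) * Real.log n) - 1)
      Filter.atTop (nhds 0) := by
    apply squeeze_zero_norm' _ hCtend
    filter_upwards [Filter.eventually_ge_atTop i, Filter.eventually_ge_atTop 2] with n hn hn2
    have h2nr : (2:ℝ) ≤ (n:ℝ) := by exact_mod_cast hn2
    have hlpos : (0:ℝ) < Real.log n := Real.log_pos (by linarith)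
    have hmlpos : (0:ℝ) < (m:ℝ) * Real.log n := by positivity
    have heq : a n / ((m:ℝ) * Real.log n) - 1
        = (a n - (m:ℝ) * Real.log n) / ((m:ℝ) * Real.log n) := by
      field_simp
    rw [Real.norm_eq_abs, heq, abs_div, abs_of_pos hmlpos]
    gcongr
    exact habs n hn
  have hfin := hsqueeze.add (tendsto_const_nhds (x := (1:ℝ)))
  simp only [zero_add] at hfin
  convert hfin using 2 with n
  ring
end

section
/- In the linear de-preferential attachment model with m=1, there is a constant C₁ such that |E[N_k(n)] − n·2^{-k}| ≤ C₁ log n for all n ≥ 2 and all k ≥ 1. -/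
open MeasureTheory ProbabilityTheory

private lemma depref_aux_step2 (N L : ℝ) (h : 5 ≤ N) (hL0 : 0 ≤ L) (hL : L ≤ N - 1) :
    (20*L)/((N-1)*(2*N-1)) ≤ 20/(2*N-1) := by
  have hD : (0:ℝ) < (N-1)*(2*N-1) := by nlinarith
  have h2N : (0:ℝ) < 2*N-1 := by nlinarith
  rw [div_le_div_iff₀ hD h2N]
  nlinarith

private lemma depref_aux_step3 (N : ℝ) (h : 5 ≤ N) : 20/(2*N-1) + 4/N ≤ 20/(N+1) := by
  have h2N : (0:ℝ) < 2*N-1 := by nlinarith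
  have hN : (0:ℝ) < N := by nlinarith
  rw [div_add_div _ _ (ne_of_gt h2N) (ne_of_gt hN),
    div_le_div_iff₀ (mul_pos h2N hN) (by linarith : (0:ℝ) < N+1)]
  nlinarith [mul_nonneg (by linarith : (0:ℝ) ≤ N-5) (by linarith : (0:ℝ) ≤ N)]

set_option maxHeartbeats 1000000

/-- In the linear de-preferential attachment model with `m = 1`, there is a constant `C₁`
such that `|E[N_k(n)] - n·2^{-k}| ≤ C₁ log n` for all `n ≥ 2` and all `k ≥ 1`, where `N_k(n)`
is the number of degree-`k` vertices in `G_n`.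
The model: `d i n` is the degree of vertex `i` in `G_n` (starting from `G_2` with degrees
`d 1 2 = 2`, `d 2 2 = 1`), the vertex `v_{n+1}` attaches to the random vertex `A n`, and
conditionally on `ℱ n` the vertex `i ∈ {1,…,n}` is chosen with probability
`(1/(n-1))(1 - d_i(n)/(2n-1))`. -/
theorem depref_linear_expected_degree_count
    {Ω : Type*} [MeasurableSpace Ω] (μ : Measure Ω) [IsProbabilityMeasure μ]
    (d : ℕ → ℕ → Ω → ℕ) (A : ℕ → Ω → ℕ) (ℱ : ℕ → MeasurableSpace Ω)
    (hℱ : ∀ n, ℱ n ≤ (inferInstance : MeasurableSpace Ω))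
    (hℱmono : ∀ n, ℱ n ≤ ℱ (n + 1))
    (hdmeas : ∀ i n, @Measurable Ω ℕ (ℱ n) _ (d i n))
    (hAmeas : ∀ n, @Measurable Ω ℕ (ℱ (n + 1)) _ (A n))
    (hinit : ∀ ω, d 1 2 ω = 2 ∧ d 2 2 ω = 1)
    (hrange : ∀ n : ℕ, 2 ≤ n → ∀ ω, 1 ≤ A n ω ∧ A n ω ≤ n)
    (hupdate : ∀ n : ℕ, 2 ≤ n → ∀ i ω,
      d i (n + 1) ω = if i = n + 1 then 1 else d i n ω + (if A n ω = i then 1 else 0))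
    (hlaw : ∀ n : ℕ, 2 ≤ n → ∀ i : ℕ, 1 ≤ i → i ≤ n →
      μ[(fun ω => Set.indicator {ω' | A n ω' = i} (fun _ => (1 : ℝ)) ω) | ℱ n]
        =ᵐ[μ] fun ω => (1 / ((n : ℝ) - 1)) * (1 - (d i n ω : ℝ) / (2 * (n : ℝ) - 1))) :
    ∃ C₁ : ℝ, ∀ n : ℕ, 2 ≤ n → ∀ k : ℕ, 1 ≤ k →
      |(∫ ω, (((Finset.Icc 1 n).filter (fun i => d i n ω = k)).card : ℝ) ∂μ) -
          (n : ℝ) * ((2 : ℝ)⁻¹) ^ k| ≤ C₁ * Real.log n := by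
    classical
  -- measurability of basic sets
  have hmB : ∀ i n j, MeasurableSet {ω | d i n ω = j} :=
    fun i n j => hℱ n _ ((hdmeas i n) (measurableSet_singleton j))
  have hmA : ∀ n i, MeasurableSet {ω | A n ω = i} :=
    fun n i => hℱ (n+1) _ ((hAmeas n) (measurableSet_singleton i))
  have hintA : ∀ n i, Integrable (fun ω => Set.indicator {ω' | A n ω' = i} (fun _ => (1:ℝ)) ω) μ :=
    fun n i => (integrable_const (1:ℝ)).indicator (hmA n i)
  have hBind : ∀ i n j, (fun ω => (if d i n ω = j then (1:ℝ) else 0)) =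
      Set.indicator {ω | d i n ω = j} (1 : Ω → ℝ) := by
    intro i n j
    funext ω; by_cases h : d i n ω = j <;> simp [Set.indicator_apply, h]
  have hintB : ∀ i n j, Integrable (fun ω => (if d i n ω = j then (1:ℝ) else 0)) μ := by
    intro i n j
    rw [hBind]
    exact (integrable_const (1:ℝ)).indicator (hmB i n j)
  have hintBA : ∀ i n j, Integrable
      (fun ω => (if d i n ω = j then (1:ℝ) else 0) * (if A n ω = i then (1:ℝ) else 0)) μ := by
    intro i n j
    have : (fun ω => (if d i n ω = j then (1:ℝ) else 0) * (if A n ω = i then (1:ℝ) else 0))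
        = Set.indicator ({ω | d i n ω = j} ∩ {ω | A n ω = i}) (1 : Ω → ℝ) := by
      funext ω
      by_cases h : d i n ω = j <;> by_cases h' : A n ω = i <;>
        simp [Set.indicator_apply, h, h']
    rw [this]
    exact (integrable_const (1:ℝ)).indicator ((hmB i n j).inter (hmA n i))
  -- expected counts
  set I : ℕ → ℕ → ℕ → ℝ := fun i n j => ∫ ω, (if d i n ω = j then (1:ℝ) else 0) ∂μ with hIdef
  set a : ℕ → ℕ → ℝ := fun n k => ∑ i ∈ Finset.Icc 1 n, I i n k with hadef
  set c : ℕ → ℕ → ℝ :=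
    fun n j => (1 / ((n : ℝ) - 1)) * (1 - (j : ℝ) / (2 * (n : ℝ) - 1)) with hcdef
  -- the goal integrand equals a n k
  have hgoal : ∀ n k : ℕ,
      (∫ ω, (((Finset.Icc 1 n).filter (fun i => d i n ω = k)).card : ℝ) ∂μ) = a n k := by
    intro n k
    have h1 : ∀ ω, (((Finset.Icc 1 n).filter (fun i => d i n ω = k)).card : ℝ)
        = ∑ i ∈ Finset.Icc 1 n, (if d i n ω = k then (1:ℝ) else 0) := by
      intro ω
      rw [Finset.card_filter]
      push_cast
      rfl
    simp only [h1]
    rw [integral_finset_sum _ (fun i _ => hintB i n k)]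
  -- basic values/bounds for I
  have hIval : ∀ i n j, I i n j = (μ {ω | d i n ω = j}).toReal := by
    intro i n j
    rw [hIdef]
    simp only
    rw [hBind i n j, integral_indicator_one (hmB i n j)]
    rfl
  have hI0 : ∀ i n j, 0 ≤ I i n j := by
    intro i n j; rw [hIval]; exact ENNReal.toReal_nonneg
  have hI1 : ∀ i n j, I i n j ≤ 1 := by
    intro i n j; rw [hIval]
    have := prob_le_one (μ := μ) (s := {ω | d i n ω = j})
    calc (μ {ω | d i n ω = j}).toReal ≤ (1 : ENNReal).toReal :=
          ENNReal.toReal_mono ENNReal.one_ne_top this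
      _ = 1 := by simp
  have ha0' : ∀ n k, 0 ≤ a n k := by
    intro n k; exact Finset.sum_nonneg (fun i _ => hI0 i n k)
  have haN : ∀ n k, a n k ≤ n := by
    intro n k
    calc a n k ≤ ∑ _i ∈ Finset.Icc 1 n, (1:ℝ) := Finset.sum_le_sum (fun i _ => hI1 i n k)
      _ = n := by simp
  -- degree bounds
  have hdeg : ∀ n, 2 ≤ n → ∀ ω, ∀ i, 1 ≤ i → i ≤ n → 1 ≤ d i n ω ∧ d i n ω ≤ n := by
    intro n hn
    induction n, hn using Nat.le_induction with
    | base =>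
      intro ω i h1 h2
      interval_cases i
      · rw [(hinit ω).1]; omega
      · rw [(hinit ω).2]; omega
    | succ n hn ih =>
      intro ω i h1 h2
      rw [hupdate n hn i ω]
      by_cases h : i = n + 1
      · rw [if_pos h]; omega
      · rw [if_neg h]
        have := ih ω i h1 (by omega)
        split_ifs <;> omega
  -- vanishing cases
  have hIzero : ∀ i n j, (∀ ω, d i n ω ≠ j) → I i n j = 0 := by
    intro i n j h
    rw [hIdef]
    simp only
    have : (fun ω => (if d i n ω = j then (1:ℝ) else 0)) = fun _ => (0:ℝ) := by
      funext ω; rw [if_neg (h ω)]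
    rw [this, integral_zero]
  have ha0 : ∀ n, 2 ≤ n → a n 0 = 0 := by
    intro n hn
    refine Finset.sum_eq_zero (fun i hi => ?_)
    simp only [Finset.mem_Icc] at hi
    exact hIzero i n 0 (fun ω => by have := hdeg n hn ω i hi.1 hi.2; omega)
  have habig : ∀ n, 2 ≤ n → ∀ k, n + 1 ≤ k → a n k = 0 := by
    intro n hn k hk
    refine Finset.sum_eq_zero (fun i hi => ?_)
    simp only [Finset.mem_Icc] at hi
    exact hIzero i n k (fun ω => by have := hdeg n hn ω i hi.1 hi.2; omega)
  -- key conditional-expectation computation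
  have key : ∀ n : ℕ, 2 ≤ n → ∀ i : ℕ, 1 ≤ i → i ≤ n → ∀ j : ℕ,
      ∫ ω, (if d i n ω = j then (1:ℝ) else 0) * (if A n ω = i then (1:ℝ) else 0) ∂μ
      = c n j * I i n j := by
    intro n hn i hi1 hi2 j
    have h1 : (fun ω => (if d i n ω = j then (1:ℝ) else 0) * (if A n ω = i then (1:ℝ) else 0))
        = Set.indicator {ω | d i n ω = j}
            (fun ω => Set.indicator {ω' | A n ω' = i} (fun _ => (1:ℝ)) ω) := by
      funext ω
      by_cases h : d i n ω = j <;> by_cases h' : A n ω = i <;>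
        simp [Set.indicator_apply, h, h']
    rw [h1, integral_indicator (hmB i n j)]
    have hBm : MeasurableSet[ℱ n] {ω | d i n ω = j} := (hdmeas i n) (measurableSet_singleton j)
    rw [← setIntegral_condExp (hℱ n) (hintA n i) hBm]
    rw [setIntegral_congr_ae (hmB i n j)
      (((hlaw n hn i hi1 hi2)).mono (fun ω h _ => h))]
    have h2 : ∫ ω in {ω | d i n ω = j},
        (1 / ((n : ℝ) - 1)) * (1 - (d i n ω : ℝ) / (2 * (n : ℝ) - 1)) ∂μ
        = ∫ _ω in {ω | d i n ω = j},
        (1 / ((n : ℝ) - 1)) * (1 - (j : ℝ) / (2 * (n : ℝ) - 1)) ∂μ := by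
      refine setIntegral_congr_fun (hmB i n j) (fun ω hω => ?_)
      simp only [Set.mem_setOf_eq] at hω
      rw [hω]
    rw [h2, setIntegral_const, hIval]
    simp only [hcdef, smul_eq_mul, measureReal_def]
    ring
  -- pointwise update identity
  have hsplit : ∀ n, 2 ≤ n → ∀ k, 1 ≤ k → ∀ i, i ≤ n → ∀ ω,
      (if d i (n+1) ω = k then (1:ℝ) else 0) =
        (if d i n ω = k then (1:ℝ) else 0)
        - (if d i n ω = k then (1:ℝ) else 0) * (if A n ω = i then (1:ℝ) else 0)
        + (if d i n ω = k - 1 then (1:ℝ) else 0) * (if A n ω = i then (1:ℝ) else 0) := by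
    intro n hn k hk i hi ω
    rw [hupdate n hn i ω, if_neg (by omega : ¬ i = n + 1)]
    rcases eq_or_ne (A n ω) i with hA | hA <;>
      simp only [hA, if_true, if_false, ite_true, ite_false, eq_self_iff_true] <;>
      split_ifs <;> first | (exfalso; omega) | ring
  -- recurrence for individual I
  have hIrec : ∀ n, 2 ≤ n → ∀ k, 1 ≤ k → ∀ i, 1 ≤ i → i ≤ n →
      I i (n+1) k = I i n k - c n k * I i n k + c n (k-1) * I i n (k-1) := by
    intro n hn k hk i hi1 hi2
    have heq : (fun ω => (if d i (n+1) ω = k then (1:ℝ) else 0)) =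
        (fun ω => ((if d i n ω = k then (1:ℝ) else 0)
          - (if d i n ω = k then (1:ℝ) else 0) * (if A n ω = i then (1:ℝ) else 0))
          + (if d i n ω = k - 1 then (1:ℝ) else 0) * (if A n ω = i then (1:ℝ) else 0)) := by
      funext ω; rw [hsplit n hn k hk i hi2 ω]
    have h1' : Integrable (fun ω => (if d i n ω = k then (1:ℝ) else 0)
        - (if d i n ω = k then (1:ℝ) else 0) * (if A n ω = i then (1:ℝ) else 0)) μ := by
      exact (hintB i n k).sub (hintBA i n k)
    rw [hIdef]
    simp only
    rw [heq, integral_add h1' (hintBA i n (k-1)),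
      integral_sub (hintB i n k) (hintBA i n k), key n hn i hi1 hi2 k,
      key n hn i hi1 hi2 (k-1)]
  -- value of I for the new vertex
  have hInew : ∀ n, 2 ≤ n → ∀ k, I (n+1) (n+1) k = if k = 1 then (1:ℝ) else 0 := by
    intro n hn k
    rw [hIdef]
    simp only
    have h1 : (fun ω => (if d (n+1) (n+1) ω = k then (1:ℝ) else 0))
        = fun _ω => (if k = 1 then (1:ℝ) else 0) := by
      funext ω
      rw [hupdate n hn (n+1) ω, if_pos rfl]
      by_cases h : k = 1 <;> simp [h] <;> omega
    rw [h1, integral_const]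
    simp
  -- recurrence for a
  have harec : ∀ n, 2 ≤ n → ∀ k, 1 ≤ k →
      a (n+1) k = (1 - c n k) * a n k + c n (k-1) * a n (k-1)
        + (if k = 1 then (1:ℝ) else 0) := by
    intro n hn k hk
    rw [hadef]
    simp only
    rw [Finset.sum_Icc_succ_top (by omega : 1 ≤ n + 1)]
    rw [Finset.sum_congr rfl (fun i hi => by
      simp only [Finset.mem_Icc] at hi
      exact hIrec n hn k hk i hi.1 hi.2)]
    rw [hInew n hn k]
    rw [Finset.sum_add_distrib, Finset.sum_sub_distrib, ← Finset.mul_sum, ← Finset.mul_sum]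
    ring
  -- analytic part
  have hlog2 : (0.6931471803 : ℝ) < Real.log 2 := Real.log_two_gt_d9
  -- trivial bound for small n
  have htriv : ∀ m : ℕ, 2 ≤ m → (m:ℝ) ≤ 20 * Real.log 2 → ∀ k : ℕ,
      |a m k - (m:ℝ) * ((2:ℝ)⁻¹)^k| ≤ 20 * Real.log m := by
    intro m h2 h5 k
    have hx1 : ((2:ℝ)⁻¹)^k ≤ 1 := pow_le_one₀ (by norm_num) (by norm_num)
    have hx0 : (0:ℝ) ≤ ((2:ℝ)⁻¹)^k := by positivity
    have hm0 : (0:ℝ) ≤ (m:ℝ) := by positivity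
    have h1 := ha0' m k
    have h2' := haN m k
    have hlm : Real.log 2 ≤ Real.log m := by
      apply Real.log_le_log (by norm_num)
      exact_mod_cast h2
    have hxm : (0:ℝ) ≤ (m:ℝ) * ((2:ℝ)⁻¹)^k := by positivity
    have hxm' : (m:ℝ) * ((2:ℝ)⁻¹)^k ≤ (m:ℝ) := by nlinarith
    rw [abs_le]
    constructor
    · nlinarith
    · nlinarith
  have main : ∀ n : ℕ, 2 ≤ n → ∀ k : ℕ, 1 ≤ k →
      |a n k - (n:ℝ) * ((2:ℝ)⁻¹)^k| ≤ 20 * Real.log n := by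
    intro n hn
    induction n, hn using Nat.le_induction with
    | base =>
      intro k _
      exact htriv 2 le_rfl (by push_cast; nlinarith [hlog2]) k
    | succ n hn ih =>
      intro k hk
      by_cases hsmall : n + 1 ≤ 5
      · refine htriv (n+1) (by omega) ?_ k
        have : ((n:ℝ)+1) ≤ 5 := by exact_mod_cast hsmall
        push_cast
        nlinarith
      have hn5 : 5 ≤ n := by omega
      have hN5 : (5:ℝ) ≤ (n:ℝ) := by exact_mod_cast hn5
      have hN1 : (0:ℝ) < (n:ℝ) - 1 := by linarith
      have h2N : (0:ℝ) < 2*(n:ℝ) - 1 := by linarith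
      have hNpos : (0:ℝ) < (n:ℝ) := by linarith
      have hlogN0 : 0 ≤ Real.log n := Real.log_nonneg (by exact_mod_cast (by omega : 1 ≤ n))
      have hlogub : Real.log n ≤ (n:ℝ) - 1 := Real.log_le_sub_one_of_pos hNpos
      have hlogstep : 1/((n:ℝ)+1) ≤ Real.log ((n:ℝ)+1) - Real.log n := by
        have h := Real.log_le_sub_one_of_pos (show (0:ℝ) < (n:ℝ)/((n:ℝ)+1) by positivity)
        rw [Real.log_div (by linarith) (by linarith)] at h
        have h2 : (n:ℝ)/((n:ℝ)+1) - 1 = -(1/((n:ℝ)+1)) := by field_simp; ring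
        rw [h2] at h
        linarith
      have hlogN1 : Real.log 2 ≤ Real.log ((n:ℝ)+1) := Real.log_le_log (by norm_num) (by linarith)
      have hcastsucc : ((n+1 : ℕ) : ℝ) = (n:ℝ) + 1 := by push_cast; ring
      rw [hcastsucc]
      by_cases hkbig : n + 2 ≤ k
      · -- large k: a (n+1) k = 0
        rw [habig (n+1) (by omega) k (by omega)]
        have e1 : ((2:ℝ)⁻¹)^k ≤ ((2:ℝ)⁻¹)^(n+2) :=
          pow_le_pow_of_le_one (by norm_num) (by norm_num) hkbig
        have e2 : ((n:ℝ)+1) ≤ (2:ℝ)^(n+2) := by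
          have h1 : n + 1 ≤ 2^(n+2) := by
            have := Nat.lt_two_pow_self (n := n+1)
            have h2 : (2:ℕ)^(n+1) ≤ 2^(n+2) := Nat.pow_le_pow_right (by norm_num) (by omega)
            omega
          exact_mod_cast h1
        have e3 : (0:ℝ) ≤ ((2:ℝ)⁻¹)^(n+2) := by positivity
        have e4 : ((n:ℝ)+1) * ((2:ℝ)⁻¹)^k ≤ 1 := by
          calc ((n:ℝ)+1) * ((2:ℝ)⁻¹)^k ≤ ((n:ℝ)+1) * ((2:ℝ)⁻¹)^(n+2) := by
                apply mul_le_mul_of_nonneg_left e1 (by linarith)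
            _ ≤ (2:ℝ)^(n+2) * ((2:ℝ)⁻¹)^(n+2) := mul_le_mul_of_nonneg_right e2 e3
            _ = 1 := by rw [← mul_pow]; norm_num
        rw [zero_sub, abs_neg, abs_of_nonneg (by positivity)]
        nlinarith
      -- now 1 ≤ k ≤ n+1
      have hkle : k ≤ n + 1 := by omega
      have hrec := harec n hn k hk
      have hcval : ∀ j : ℕ, (j:ℝ) ≤ 2*(n:ℝ) - 1 → 0 ≤ c n j ∧ c n j ≤ 1 := by
        intro j hj
        have hj0 : (0:ℝ) ≤ (j:ℝ) := by positivity
        have hd1 : (j:ℝ)/(2*(n:ℝ)-1) ≤ 1 := (div_le_one h2N).mpr hj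
        have hd0 : 0 ≤ (j:ℝ)/(2*(n:ℝ)-1) := by positivity
        rw [hcdef]
        constructor
        · apply mul_nonneg (by positivity); linarith
        · have h1 : (1:ℝ)/((n:ℝ)-1) ≤ 1 := by rw [div_le_one hN1]; linarith
          exact mul_le_one₀ h1 (by linarith) (by linarith)
      rcases Nat.lt_or_ge k 2 with hk1 | hk2
      · -- k = 1
        have hk1' : k = 1 := by omega
        subst hk1'
        rw [ha0 n hn] at hrec
        have hc : c n 1 = 2/(2*(n:ℝ)-1) := by
          have hD3 : -1 + (n:ℝ)*2 ≠ 0 := by linarith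
          rw [hcdef]
          push_cast
          field_simp
          ring_nf
          field_simp
          ring
        have hcb := hcval 1 (by push_cast; linarith)
        have IH := ih 1 le_rfl
        rw [pow_one] at IH ⊢
        have hkey : a (n+1) 1 - ((n:ℝ)+1)*(2:ℝ)⁻¹ =
            (1 - c n 1)*(a n 1 - (n:ℝ)*(2:ℝ)⁻¹) + ((2:ℝ)⁻¹ - c n 1 * ((n:ℝ) * (2:ℝ)⁻¹)) := by
          rw [hrec, if_pos rfl]; ring
        have hrval : (2:ℝ)⁻¹ - c n 1 * ((n:ℝ) * (2:ℝ)⁻¹) = -(1/(2*(2*(n:ℝ)-1))) := by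
          rw [hc]; field_simp; ring
        rw [hkey, hrval]
        have h1c : 0 ≤ 1 - c n 1 := by linarith [hcb.2]
        have hpos : (0:ℝ) < 1/(2*(2*(n:ℝ)-1)) := by
          apply div_pos one_pos; linarith
        calc |(1 - c n 1)*(a n 1 - (n:ℝ)*(2:ℝ)⁻¹) + -(1/(2*(2*(n:ℝ)-1)))|
            ≤ |(1 - c n 1)*(a n 1 - (n:ℝ)*(2:ℝ)⁻¹)| + |(-(1/(2*(2*(n:ℝ)-1))))| := abs_add_le _ _
          _ = (1 - c n 1)*|a n 1 - (n:ℝ)*(2:ℝ)⁻¹| + 1/(2*(2*(n:ℝ)-1)) := by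
              rw [abs_mul, abs_of_nonneg h1c, abs_neg, abs_of_pos hpos]
          _ ≤ 1*(20 * Real.log n) + 1/(2*(2*(n:ℝ)-1)) := by
              have s1 := mul_le_mul_of_nonneg_left IH h1c
              have s2 : (1 - c n 1)*(20 * Real.log n) ≤ 1*(20 * Real.log n) :=
                mul_le_mul_of_nonneg_right (by linarith [hcb.1]) (by linarith)
              linarith
          _ ≤ 20 * Real.log ((n:ℝ)+1) := by
              have hq : 1/(2*(2*(n:ℝ)-1)) ≤ 20/((n:ℝ)+1) := by
                rw [div_le_div_iff₀ (by linarith) (by linarith)]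
                nlinarith
              have hq2 : 20/((n:ℝ)+1) ≤ 20*(Real.log ((n:ℝ)+1) - Real.log n) := by
                have h20 := mul_le_mul_of_nonneg_left hlogstep (by norm_num : (0:ℝ) ≤ 20)
                calc 20/((n:ℝ)+1) = 20*(1/((n:ℝ)+1)) := by ring
                  _ ≤ _ := h20
              linarith
      · -- 2 ≤ k ≤ n+1
        have hK2 : (2:ℝ) ≤ (k:ℝ) := by exact_mod_cast hk2
        have hKle : (k:ℝ) ≤ (n:ℝ)+1 := by exact_mod_cast hkle
        have hkm1cast : ((k-1 : ℕ):ℝ) = (k:ℝ) - 1 := by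
          push_cast [Nat.cast_sub hk]; ring
        set x : ℝ := ((2:ℝ)⁻¹)^k with hxdef
        have hxpos : 0 < x := by rw [hxdef]; positivity
        have hx2 : ((2:ℝ)⁻¹)^(k-1) = 2*x := by
          have hksucc : k - 1 + 1 = k := by omega
          have hstep : x = ((2:ℝ)⁻¹)^(k-1) * 2⁻¹ := by rw [hxdef, ← pow_succ, hksucc]
          rw [hstep]; ring
        have hcbk := hcval k (by linarith)
        have hcbk1 := hcval (k-1) (by rw [hkm1cast]; linarith)
        have hdiff : c n (k-1) - c n k = 1/(((n:ℝ)-1)*(2*(n:ℝ)-1)) := by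
          rw [hcdef]
          simp only [hkm1cast]
          field_simp
          ring
        have IHk := ih k hk
        have IHk1 := ih (k-1) (by omega)
        rw [hx2] at IHk1
        rw [← hxdef] at IHk
        have hkey : a (n+1) k - ((n:ℝ)+1)*x =
            (1 - c n k)*(a n k - (n:ℝ)*x) + c n (k-1)*(a n (k-1) - (n:ℝ)*(2*x))
            + x*((4*(n:ℝ) - (n:ℝ)*(k:ℝ) - 1)/(((n:ℝ)-1)*(2*(n:ℝ)-1))) := by
          have hD3 : -1 + (n:ℝ)*2 ≠ 0 := by linarith
          rw [hrec, if_neg (by omega : ¬ k = 1), hcdef]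
          simp only [hkm1cast]
          field_simp
          ring_nf
          field_simp
          ring
        -- bound the remainder term
        have hnat : k + 5 ≤ 2^(k+1) := by
          clear * - hk2
          induction k, hk2 using Nat.le_induction with
          | base => norm_num
          | succ k hk ih =>
            have h1 : (1:ℕ) ≤ 2^(k+1) := Nat.one_le_two_pow
            rw [pow_succ]
            omega
        have hcast : ((k:ℝ)+5) ≤ (2:ℝ)^(k+1) := by exact_mod_cast hnat
        rw [pow_succ] at hcast
        have hxK : x*((k:ℝ)+5) ≤ 2 := by
          have hx' : x = ((2:ℝ)^k)⁻¹ := by rw [hxdef, inv_pow]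
          have hp : (0:ℝ) < (2:ℝ)^k := by positivity
          calc x*((k:ℝ)+5) = ((k:ℝ)+5)/(2:ℝ)^k := by rw [hx']; ring
            _ ≤ 2 := by rw [div_le_iff₀ hp]; linarith
        have habs1 : |4*(n:ℝ) - (n:ℝ)*(k:ℝ) - 1| ≤ (n:ℝ)*((k:ℝ)+5) := by
          rw [abs_le]
          constructor <;> nlinarith
        have hD : (0:ℝ) < ((n:ℝ)-1)*(2*(n:ℝ)-1) := mul_pos hN1 h2N
        have hrbound : |x*((4*(n:ℝ) - (n:ℝ)*(k:ℝ) - 1)/(((n:ℝ)-1)*(2*(n:ℝ)-1)))| ≤ 4/(n:ℝ) := by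
          have hnum : x * |4*(n:ℝ) - (n:ℝ)*(k:ℝ) - 1| ≤ 2*(n:ℝ) := by
            calc x * |4*(n:ℝ) - (n:ℝ)*(k:ℝ) - 1| ≤ x * ((n:ℝ)*((k:ℝ)+5)) :=
                  mul_le_mul_of_nonneg_left habs1 hxpos.le
              _ = (x*((k:ℝ)+5)) * (n:ℝ) := by ring
              _ ≤ 2*(n:ℝ) := mul_le_mul_of_nonneg_right hxK hNpos.le
          rw [abs_mul, abs_div, abs_of_pos hxpos, abs_of_pos hD, ← mul_div_assoc]
          rw [div_le_div_iff₀ hD hNpos]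
          nlinarith [hnum, abs_nonneg (4*(n:ℝ) - (n:ℝ)*(k:ℝ) - 1)]
        have h1c : 0 ≤ 1 - c n k := by linarith [hcbk.2]
        have hc0 : 0 ≤ c n (k-1) := hcbk1.1
        rw [hkey]
        have t1 : |(1 - c n k)*(a n k - (n:ℝ)*x)| ≤ (1 - c n k)*(20*Real.log n) := by
          rw [abs_mul, abs_of_nonneg h1c]
          exact mul_le_mul_of_nonneg_left IHk h1c
        have t2 : |c n (k-1)*(a n (k-1) - (n:ℝ)*(2*x))| ≤ c n (k-1)*(20*Real.log n) := by
          rw [abs_mul, abs_of_nonneg hc0]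
          exact mul_le_mul_of_nonneg_left IHk1 hc0
        have hq2 : 20/((n:ℝ)+1) ≤ 20*(Real.log ((n:ℝ)+1) - Real.log n) := by
          have h20 := mul_le_mul_of_nonneg_left hlogstep (by norm_num : (0:ℝ) ≤ 20)
          calc 20/((n:ℝ)+1) = 20*(1/((n:ℝ)+1)) := by ring
            _ ≤ _ := h20
        have hstep2 : (20*Real.log n)/(((n:ℝ)-1)*(2*(n:ℝ)-1)) ≤ 20/(2*(n:ℝ)-1) :=
          depref_aux_step2 (n:ℝ) (Real.log n) hN5 hlogN0 hlogub
        have hstep3 : 20/(2*(n:ℝ)-1) + 4/(n:ℝ) ≤ 20/((n:ℝ)+1) :=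
          depref_aux_step3 (n:ℝ) hN5
        calc |(1 - c n k)*(a n k - (n:ℝ)*x) + c n (k-1)*(a n (k-1) - (n:ℝ)*(2*x))
              + x*((4*(n:ℝ) - (n:ℝ)*(k:ℝ) - 1)/(((n:ℝ)-1)*(2*(n:ℝ)-1)))|
            ≤ |(1 - c n k)*(a n k - (n:ℝ)*x) + c n (k-1)*(a n (k-1) - (n:ℝ)*(2*x))|
              + |x*((4*(n:ℝ) - (n:ℝ)*(k:ℝ) - 1)/(((n:ℝ)-1)*(2*(n:ℝ)-1)))| := abs_add_le _ _
          _ ≤ (1 - c n k)*(20*Real.log n) + c n (k-1)*(20*Real.log n) + 4/(n:ℝ) := by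
              have h3 := abs_add_le ((1 - c n k)*(a n k - (n:ℝ)*x))
                (c n (k-1)*(a n (k-1) - (n:ℝ)*(2*x)))
              linarith [t1, t2, hrbound]
          _ = 20*Real.log n + (c n (k-1) - c n k)*(20*Real.log n) + 4/(n:ℝ) := by ring
          _ = 20*Real.log n + (20*Real.log n)/(((n:ℝ)-1)*(2*(n:ℝ)-1)) + 4/(n:ℝ) := by
              rw [hdiff]; ring
          _ ≤ 20 * Real.log ((n:ℝ)+1) := by linarith [hstep2, hstep3, hq2]
  refine ⟨20, ?_⟩
  intro n hn k hk
  rw [hgoal n k]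
  exact main n hn k hk
end

section
/- Let b_n be a sequence of random variables with m²/n ≤ b_n ≤ 2m²/n almost surely, and suppose (τ_{n+1} − τ_n − b_n) is a martingale difference sequence with ∑_n b_n² < ∞. Then with c_n = ∑_{l=i}^{n} b_l we have (τ_n − τ_i)/c_n → 1 almost surely, and c_n = Θ(m² log n). -/
open MeasureTheory ProbabilityTheory

section AuxEmbedding
open Filter
open scoped ENNReal NNReal
open Finset

lemma log_succ_sub_le (l : ℕ) (hl : 1 ≤ l) :
    Real.log ((l:ℝ)+1) - Real.log l ≤ 1/(l:ℝ) := by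
  have hl0 : (0:ℝ) < l := by exact_mod_cast hl
  have h := Real.log_le_sub_one_of_pos (show (0:ℝ) < ((l:ℝ)+1)/l by positivity)
  rw [Real.log_div (by positivity) (ne_of_gt hl0)] at h
  have : ((l:ℝ)+1)/l - 1 = 1/l := by field_simp; ring
  linarith

lemma inv_le_log_sub (l : ℕ) (hl : 2 ≤ l) :
    1/(l:ℝ) ≤ Real.log l - Real.log ((l:ℝ)-1) := by
  have hl0 : (2:ℝ) ≤ l := by exact_mod_cast hl
  have h := Real.log_le_sub_one_of_pos (show (0:ℝ) < ((l:ℝ)-1)/l by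
    apply div_pos <;> linarith)
  rw [Real.log_div (by linarith) (by linarith)] at h
  have : ((l:ℝ)-1)/l - 1 = -(1/l) := by field_simp; ring
  linarith

lemma sum_inv_le_log (i : ℕ) (hi : 2 ≤ i) :
    ∀ n, i ≤ n → ∑ l ∈ Finset.Icc i n, (1:ℝ)/l ≤ Real.log n - Real.log ((i:ℝ)-1) := by
  intro n hn
  induction n, hn using Nat.le_induction with
  | base =>
      rw [Finset.Icc_self, Finset.sum_singleton]
      exact inv_le_log_sub i hi
  | succ n hn ih =>
      rw [Finset.sum_Icc_succ_top (le_trans hn (Nat.le_succ n))]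
      have h2 : 1/((n:ℝ)+1) ≤ Real.log ((n:ℝ)+1) - Real.log n := by
        have := inv_le_log_sub (n+1) (by omega)
        push_cast at this ⊢
        simpa using this
      push_cast
      linarith

lemma log_le_sum_inv (i : ℕ) (hi : 1 ≤ i) :
    ∀ n, i ≤ n → Real.log ((n:ℝ)+1) - Real.log i ≤ ∑ l ∈ Finset.Icc i n, (1:ℝ)/l := by
  intro n hn
  induction n, hn using Nat.le_induction with
  | base =>
      rw [Finset.Icc_self, Finset.sum_singleton]
      exact log_succ_sub_le i hi
  | succ n hn ih =>
      rw [Finset.sum_Icc_succ_top (le_trans hn (Nat.le_succ n))]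
      have h2 : Real.log ((n:ℝ)+1+1) - Real.log ((n:ℝ)+1) ≤ 1/((n:ℝ)+1) := by
        have := log_succ_sub_le (n+1) (le_trans hi (le_trans hn (Nat.le_succ n)))
        push_cast at this ⊢
        simpa using this
      push_cast
      linarith

lemma sum_inv_sq_le_one (i : ℕ) (hi : 2 ≤ i) :
    ∀ n, i ≤ n → ∑ l ∈ Finset.Ico i n, (1:ℝ)/(l:ℝ)^2 ≤ 1 := by
  have key : ∀ n, i ≤ n →
      ∑ l ∈ Finset.Ico i n, (1:ℝ)/(l:ℝ)^2 ≤ 1/((i:ℝ)-1) - 1/((n:ℝ)-1) := by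
    intro n hn
    induction n, hn using Nat.le_induction with
    | base => simp
    | succ n hn ih =>
        rw [Finset.sum_Ico_succ_top hn]
        have hn2 : (2:ℝ) ≤ n := by exact_mod_cast le_trans hi hn
        have h2 : 1/((n:ℝ))^2 ≤ 1/((n:ℝ)-1) - 1/(n:ℝ) := by
          rw [div_sub_div _ _ (by linarith) (by linarith), one_mul, mul_one]
          rw [div_le_div_iff₀ (by positivity) (by nlinarith)]
          nlinarith
        have h6 : ((n:ℝ)+1-1) = (n:ℝ) := by ring
        push_cast
        rw [h6]
        linarith
  intro n hn
  have hi1 : (1:ℝ) ≤ (i:ℝ)-1 := by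
    have : (2:ℝ) ≤ i := by exact_mod_cast hi
    linarith
  have hn1 : (1:ℝ) ≤ (n:ℝ)-1 := by
    have : (2:ℝ) ≤ n := by exact_mod_cast le_trans hi hn
    linarith
  have := key n hn
  have h4 : 1/((i:ℝ)-1) ≤ 1 := by
    rw [div_le_one (by linarith)]; linarith
  have h5 : 0 < 1/((n:ℝ)-1) := by positivity
  linarith

open scoped ENNReal NNReal

theorem aux_mds_conv {Ω : Type*} [m0 : MeasurableSpace Ω] (μ : Measure Ω)
    [IsProbabilityMeasure μ] (i : ℕ) (hi : 2 ≤ i) (M : ℝ) (hM : 0 ≤ M)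
    (X : ℕ → Ω → ℝ) (ℱ : ℕ → MeasurableSpace Ω)
    (hℱ : ∀ n, ℱ n ≤ m0) (hmono : Monotone ℱ)
    (hXmeas : ∀ n, @Measurable Ω ℝ (ℱ (n+1)) _ (X n))
    (hX2 : ∀ n, i ≤ n → MemLp (X n) 2 μ)
    (hmds : ∀ n, i ≤ n → μ[X n | ℱ n] =ᵐ[μ] fun _ => (0:ℝ))
    (hvar : ∀ n, i ≤ n → ∫ ω, (X n ω)^2 ∂μ ≤ M / (n:ℝ)^2)
    (hsum : ∀ n, i ≤ n → ∑ l ∈ Finset.Ico i n, (1:ℝ)/(l:ℝ)^2 ≤ 1) :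
    ∀ᵐ ω ∂μ, ∃ L, Filter.Tendsto (fun n => ∑ l ∈ Finset.Ico i n, X l ω)
      Filter.atTop (nhds L) := by
  set Y : ℕ → Ω → ℝ := fun n ω => ∑ l ∈ Finset.Ico i (max n i), X l ω with hYdef
  set 𝒢 : Filtration ℕ m0 :=
    ⟨fun n => ℱ (max n i), fun a b hab => hmono (max_le_max hab le_rfl),
      fun n => hℱ _⟩ with h𝒢def
  have hXmeas_le : ∀ l n, l + 1 ≤ n → @Measurable Ω ℝ (ℱ n) _ (X l) :=
    fun l n h => (hXmeas l).mono (hmono h) le_rfl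
  have hYmeas : ∀ n, @Measurable Ω ℝ (ℱ (max n i)) _ (Y n) := fun n => by
    apply Finset.measurable_sum
    intro l hl
    exact hXmeas_le l _ (Finset.mem_Ico.1 hl).2
  have hYl2 : ∀ n, MemLp (Y n) 2 μ := fun n =>
    memLp_finsetSum _ (fun l hl => hX2 l (Finset.mem_Ico.1 hl).1)
  have hYint : ∀ n, Integrable (Y n) μ := fun n => (hYl2 n).integrable one_le_two
  have hXint : ∀ l, i ≤ l → Integrable (X l) μ :=
    fun l hl => (hX2 l hl).integrable one_le_two
  have hY0 : ∀ n, n ≤ i → Y n = 0 := by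
    intro n hn
    funext ω
    simp [hYdef, max_eq_right hn]
  have hYsucc : ∀ n, i ≤ n → Y (n+1) = fun ω => Y n ω + X n ω := by
    intro n hn
    funext ω
    simp only [hYdef, max_eq_left hn, max_eq_left (le_trans hn (Nat.le_succ n))]
    exact Finset.sum_Ico_succ_top hn _
  have hadp : StronglyAdapted 𝒢 Y := fun n => (hYmeas n).stronglyMeasurable
  have hmart : Martingale Y 𝒢 μ := by
    apply martingale_nat hadp hYint
    intro n
    by_cases hn : i ≤ n
    · have hmax : max n i = n := max_eq_left hn
      have hmax' : max (n+1) i = n+1 := max_eq_left (le_trans hn (Nat.le_succ n))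
      show Y n =ᵐ[μ] μ[Y (n+1) | ℱ (max n i)]
      rw [hmax, hYsucc n hn]
      have h1 : μ[(fun ω => Y n ω + X n ω) | ℱ n]
          =ᵐ[μ] μ[Y n | ℱ n] + μ[X n | ℱ n] := condExp_add (hYint n) (hXint n hn) _
      have h2 : μ[Y n | ℱ n] = Y n := by
        apply condExp_of_stronglyMeasurable (hℱ n)
        · have := hYmeas n; rw [hmax] at this; exact this.stronglyMeasurable
        · exact hYint n
      refine EventuallyEq.symm (h1.trans ?_)
      filter_upwards [hmds n hn] with ω hω
      simp [h2, hω]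
    · push_neg at hn
      show Y n =ᵐ[μ] μ[Y (n+1) | ℱ (max n i)]
      rw [hY0 n (le_of_lt hn), hY0 (n+1) hn, condExp_zero]
  -- second moment bound
  have hYsq : ∀ n, i ≤ n →
      ∫ ω, (Y n ω)^2 ∂μ ≤ M * ∑ l ∈ Finset.Ico i n, (1:ℝ)/(l:ℝ)^2 := by
    intro n hn
    induction n, hn using Nat.le_induction with
    | base =>
        rw [hY0 i le_rfl]
        simp
    | succ n hn ih =>
        have hYX2 : MemLp (fun ω => Y n ω * X n ω) 1 μ := by
          have h := (hX2 n hn).smul (hYl2 n) (r := 1)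
          exact h
        have hintYX : Integrable (fun ω => Y n ω * X n ω) μ :=
          memLp_one_iff_integrable.1 hYX2
        have hint1 : Integrable (fun ω => Y n ω ^ 2) μ := (hYl2 n).integrable_sq
        have hint2 : Integrable (fun ω => X n ω ^ 2) μ := (hX2 n hn).integrable_sq
        have hsmY : StronglyMeasurable[ℱ n] (Y n) := by
          have := hYmeas n; rw [max_eq_left hn] at this; exact this.stronglyMeasurable
        have hcross : ∫ ω, Y n ω * X n ω ∂μ = 0 := by
          have h1 : μ[(fun ω => Y n ω * X n ω) | ℱ n]
              =ᵐ[μ] fun ω => Y n ω * (μ[X n | ℱ n]) ω :=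
            condExp_mul_of_stronglyMeasurable_left hsmY hintYX (hXint n hn)
          have h2 : μ[(fun ω => Y n ω * X n ω) | ℱ n] =ᵐ[μ] fun _ => (0:ℝ) := by
            filter_upwards [h1, hmds n hn] with ω hω1 hω2
            rw [hω1, hω2]
            simp
          calc ∫ ω, Y n ω * X n ω ∂μ
              = ∫ ω, (μ[(fun ω' => Y n ω' * X n ω') | ℱ n]) ω ∂μ :=
                (integral_condExp (hℱ n)).symm
            _ = ∫ _ω, (0:ℝ) ∂μ := integral_congr_ae h2
            _ = 0 := integral_zero _ _
        rw [hYsucc n hn]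
        have hexp : (fun ω => (Y n ω + X n ω)^2)
            = fun ω => Y n ω^2 + (2*(Y n ω * X n ω) + X n ω^2) := by
          funext ω; ring
        have hint4 : Integrable (fun ω => 2*(Y n ω * X n ω)) μ := hintYX.const_mul 2
        have hint5 : Integrable (fun ω => 2*(Y n ω * X n ω) + X n ω ^ 2) μ :=
          hint4.add hint2
        rw [hexp, integral_add hint1 hint5,
          integral_add hint4 hint2, integral_const_mul, hcross,
          Finset.sum_Ico_succ_top hn, mul_add, mul_zero, zero_add]
        apply add_le_add ih
        have := hvar n hn
        rw [mul_one_div]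
        exact this
  have hYsqbd : ∀ n, ∫ ω, (Y n ω)^2 ∂μ ≤ M := by
    intro n
    by_cases hn : i ≤ n
    · exact le_trans (hYsq n hn) (by
        have := hsum n hn
        nlinarith)
    · push_neg at hn
      rw [hY0 n (le_of_lt hn)]
      simp [hM]
  -- L¹ bound
  have hbdd : ∀ n, eLpNorm (Y n) 1 μ ≤ ENNReal.ofReal ((M+1)/2) := by
    intro n
    have habs : ∫ ω, ‖Y n ω‖ ∂μ ≤ (M+1)/2 := by
      have hptw : ∀ ω, ‖Y n ω‖ ≤ (Y n ω^2 + 1)/2 := by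
        intro ω
        rw [Real.norm_eq_abs]
        nlinarith [sq_nonneg (|Y n ω| - 1), sq_abs (Y n ω), abs_nonneg (Y n ω)]
      have hint1 : Integrable (fun ω => Y n ω ^ 2) μ := (hYl2 n).integrable_sq
      calc ∫ ω, ‖Y n ω‖ ∂μ ≤ ∫ ω, (Y n ω^2 + 1)/2 ∂μ := by
            apply integral_mono (hYint n).norm ((hint1.add (integrable_const 1)).div_const 2)
            exact hptw
        _ = ((∫ ω, Y n ω^2 ∂μ) + 1)/2 := by
            rw [integral_div, integral_add hint1 (integrable_const 1)]
            simp
        _ ≤ (M+1)/2 := by linarith [hYsqbd n]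
    have heq : eLpNorm (Y n) 1 μ = ENNReal.ofReal (∫ ω, ‖Y n ω‖ ∂μ) := by
      rw [eLpNorm_one_eq_lintegral_enorm,
        ← ofReal_integral_norm_eq_lintegral_enorm (hYint n)]
    rw [heq]
    exact ENNReal.ofReal_le_ofReal habs
  filter_upwards [hmart.submartingale.exists_ae_tendsto_of_bdd (R := ((M+1)/2).toNNReal) hbdd] with ω hω
  obtain ⟨L, hL⟩ := hω
  refine ⟨L, hL.congr' ?_⟩
  filter_upwards [eventually_ge_atTop i] with n hn
  simp [hYdef, max_eq_left hn]

end AuxEmbedding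

open Filter in
open scoped ENNReal NNReal in
/-- Let `b_n` be a sequence of random variables with `m²/n ≤ b_n ≤ 2m²/n` almost surely,
and suppose `(τ_{n+1} - τ_n - b_n)` is a martingale difference sequence (with conditional
second moments bounded by `b_n²`, as the increments are conditionally exponential) with
`∑_n b_n² < ∞` a.s.  Then with `c_n = ∑_{l=i}^n b_l` we have `(τ_n - τ_i)/c_n → 1` almost
surely, and `c_n = Θ(m² log n)`. -/
theorem embedding_jump_times_asymptotics
    {Ω : Type*} [MeasurableSpace Ω] (μ : Measure Ω) [IsProbabilityMeasure μ]
    (m i : ℕ) (hm : 1 ≤ m) (hi : 2 ≤ i)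
    (b τ : ℕ → Ω → ℝ) (ℱ : ℕ → MeasurableSpace Ω)
    (hℱ : ∀ n, ℱ n ≤ (inferInstance : MeasurableSpace Ω))
    (hℱmono : ∀ n, ℱ n ≤ ℱ (n + 1))
    (hτmeas : ∀ n, @Measurable Ω ℝ (ℱ n) _ (τ n))
    (hbmeas : ∀ n, @Measurable Ω ℝ (ℱ n) _ (b n))
    (hbound : ∀ n : ℕ, 1 ≤ n → ∀ᵐ ω ∂μ,
      (m : ℝ) ^ 2 / (n : ℝ) ≤ b n ω ∧ b n ω ≤ 2 * (m : ℝ) ^ 2 / (n : ℝ))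
    (hL2 : ∀ n, MemLp (fun ω => τ (n + 1) ω - τ n ω) 2 μ)
    (hmds : ∀ n : ℕ, i ≤ n →
      μ[(fun ω => τ (n + 1) ω - τ n ω - b n ω) | ℱ n] =ᵐ[μ] fun _ => (0 : ℝ))
    (hcondvar : ∀ n : ℕ, i ≤ n →
      ∀ᵐ ω ∂μ, (μ[(fun ω' => (τ (n + 1) ω' - τ n ω' - b n ω') ^ 2) | ℱ n]) ω ≤ (b n ω) ^ 2)
    (hsq : ∀ᵐ ω ∂μ, Summable (fun n : ℕ => (b n ω) ^ 2)) :
    (∀ᵐ ω ∂μ,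
      Filter.Tendsto
        (fun n : ℕ => (τ n ω - τ i ω) / ∑ l ∈ Finset.Icc i n, b l ω)
        Filter.atTop (nhds 1)) ∧
    ∃ c C : ℝ, 0 < c ∧ 0 < C ∧ ∀ᵐ ω ∂μ, ∀ᶠ n : ℕ in Filter.atTop,
      c * (m : ℝ) ^ 2 * Real.log n ≤ (∑ l ∈ Finset.Icc i n, b l ω) ∧
      (∑ l ∈ Finset.Icc i n, b l ω) ≤ C * (m : ℝ) ^ 2 * Real.log n := by
  have hmono : Monotone ℱ := monotone_nat_of_le_succ hℱmono
  set X : ℕ → Ω → ℝ := fun n ω => τ (n + 1) ω - τ n ω - b n ω with hXdef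
  have hm1 : (1:ℝ) ≤ (m:ℝ) := by exact_mod_cast hm
  have hi1 : (1:ℝ) ≤ (i:ℝ) := by exact_mod_cast (by omega : 1 ≤ i)
  have hb_all : ∀ᵐ ω ∂μ, ∀ l : ℕ, 1 ≤ l →
      (m:ℝ)^2/(l:ℝ) ≤ b l ω ∧ b l ω ≤ 2*(m:ℝ)^2/(l:ℝ) := by
    rw [ae_all_iff]
    intro l
    by_cases h : 1 ≤ l
    · filter_upwards [hbound l h] with ω hω _; exact hω
    · filter_upwards with ω hl; exact absurd hl h
  have hbmem : ∀ l, 1 ≤ l → MemLp (b l) 2 μ := by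
    intro l hl
    have hmeasb : AEStronglyMeasurable (b l) μ :=
      (((hbmeas l).mono (hℱ l) le_rfl)).aestronglyMeasurable
    have hbb : ∀ᵐ ω ∂μ, ‖b l ω‖ ≤ 2*(m:ℝ)^2/(l:ℝ) := by
      filter_upwards [hbound l hl] with ω hω
      have hl0 : (0:ℝ) < l := by exact_mod_cast hl
      have h0 : (0:ℝ) ≤ (m:ℝ)^2/(l:ℝ) := by positivity
      have h1 : (0:ℝ) ≤ 2*(m:ℝ)^2/(l:ℝ) := by positivity
      rw [Real.norm_eq_abs, abs_le]
      exact ⟨by linarith [hω.1], hω.2⟩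
    exact (memLp_top_of_bound hmeasb _ hbb).mono_exponent le_top
  have hX2 : ∀ n, i ≤ n → MemLp (X n) 2 μ := fun n hn =>
    (hL2 n).sub (hbmem n (by omega))
  have hXmeas : ∀ n, @Measurable Ω ℝ (ℱ (n+1)) _ (X n) := fun n =>
    ((hτmeas (n+1)).sub ((hτmeas n).mono (hmono (Nat.le_succ n)) le_rfl)).sub
      ((hbmeas n).mono (hmono (Nat.le_succ n)) le_rfl)
  have hmds' : ∀ n, i ≤ n → μ[X n | ℱ n] =ᵐ[μ] fun _ => (0:ℝ) := hmds
  have hXvar : ∀ n, i ≤ n → ∫ ω, (X n ω)^2 ∂μ ≤ (4*(m:ℝ)^4) / (n:ℝ)^2 := by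
    intro n hn
    have hn1 : 1 ≤ n := by omega
    have hn0 : (0:ℝ) < n := by exact_mod_cast hn1
    have hintb2 : Integrable (fun ω => (b n ω)^2) μ := (hbmem n hn1).integrable_sq
    have h1 : ∫ ω, (X n ω)^2 ∂μ = ∫ ω, (μ[(fun ω' => (X n ω')^2) | ℱ n]) ω ∂μ :=
      (integral_condExp (hℱ n)).symm
    have h2 : ∫ ω, (μ[(fun ω' => (X n ω')^2) | ℱ n]) ω ∂μ ≤ ∫ ω, (b n ω)^2 ∂μ := by
      apply integral_mono_ae integrable_condExp hintb2
      exact hcondvar n hn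
    have h3 : ∫ ω, (b n ω)^2 ∂μ ≤ (2*(m:ℝ)^2/(n:ℝ))^2 := by
      have hc : ∫ _ω, ((2*(m:ℝ)^2/(n:ℝ))^2) ∂μ = (2*(m:ℝ)^2/(n:ℝ))^2 := by
        simp
      rw [← hc]
      apply integral_mono_ae hintb2 (integrable_const _)
      filter_upwards [hbound n hn1] with ω hω
      have h0 : (0:ℝ) ≤ (m:ℝ)^2/(n:ℝ) := by positivity
      exact pow_le_pow_left₀ (le_trans h0 hω.1) hω.2 2
    have h4 : (2*(m:ℝ)^2/(n:ℝ))^2 = 4*(m:ℝ)^4/(n:ℝ)^2 := by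
      rw [div_pow]; congr 1; ring
    rw [h1]
    linarith
  have hconv := aux_mds_conv μ i hi (4*(m:ℝ)^4) (by positivity) X ℱ hℱ hmono
    hXmeas hX2 hmds' hXvar (sum_inv_sq_le_one i hi)
  have hkey : ∀ᵐ ω ∂μ, ∀ n, i ≤ n →
      ((m:ℝ)^2 * (Real.log ((n:ℝ)+1) - Real.log i) ≤ ∑ l ∈ Finset.Icc i n, b l ω ∧
       ∑ l ∈ Finset.Icc i n, b l ω ≤ 2*(m:ℝ)^2 * (Real.log n - Real.log ((i:ℝ)-1))) := by
    filter_upwards [hb_all] with ω hb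
    intro n hn
    constructor
    · calc (m:ℝ)^2 * (Real.log ((n:ℝ)+1) - Real.log i)
          ≤ (m:ℝ)^2 * ∑ l ∈ Finset.Icc i n, (1:ℝ)/l :=
            mul_le_mul_of_nonneg_left (log_le_sum_inv i (by omega) n hn) (by positivity)
        _ = ∑ l ∈ Finset.Icc i n, (m:ℝ)^2/l := by
            rw [Finset.mul_sum]
            exact Finset.sum_congr rfl fun l _ => mul_one_div _ _
        _ ≤ ∑ l ∈ Finset.Icc i n, b l ω := by
            apply Finset.sum_le_sum
            intro l hl
            exact (hb l (by have := (Finset.mem_Icc.1 hl).1; omega)).1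
    · calc ∑ l ∈ Finset.Icc i n, b l ω
          ≤ ∑ l ∈ Finset.Icc i n, 2*(m:ℝ)^2/l := by
            apply Finset.sum_le_sum
            intro l hl
            exact (hb l (by have := (Finset.mem_Icc.1 hl).1; omega)).2
        _ = 2*(m:ℝ)^2 * ∑ l ∈ Finset.Icc i n, (1:ℝ)/l := by
            rw [Finset.mul_sum]
            exact Finset.sum_congr rfl fun l _ => (mul_one_div _ _).symm
        _ ≤ 2*(m:ℝ)^2 * (Real.log n - Real.log ((i:ℝ)-1)) :=
            mul_le_mul_of_nonneg_left (sum_inv_le_log i hi n hn) (by positivity)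
  constructor
  · -- Part 1: ratio tends to 1
    filter_upwards [hconv, hb_all, hkey] with ω hc hb hk
    obtain ⟨L, hL⟩ := hc
    have hbpos : ∀ l, 1 ≤ l → 0 < b l ω := by
      intro l hl
      have hl0 : (0:ℝ) < l := by exact_mod_cast hl
      exact lt_of_lt_of_le (by positivity) (hb l hl).1
    have hcpos : ∀ n, i ≤ n → 0 < ∑ l ∈ Finset.Icc i n, b l ω := by
      intro n hn
      apply Finset.sum_pos
      · intro l hl
        exact hbpos l (by have := (Finset.mem_Icc.1 hl).1; omega)
      · exact ⟨i, Finset.mem_Icc.2 ⟨le_rfl, hn⟩⟩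
    have hctop : Tendsto (fun n : ℕ => ∑ l ∈ Finset.Icc i n, b l ω) atTop atTop := by
      have l1 : Tendsto (fun n:ℕ => Real.log ((n:ℝ)+1)) atTop atTop :=
        Real.tendsto_log_atTop.comp
          (tendsto_atTop_add_const_right _ 1 tendsto_natCast_atTop_atTop)
      have l2 := tendsto_atTop_add_const_right atTop (-(Real.log i)) l1
      have l3 := l2.const_mul_atTop (show (0:ℝ) < (m:ℝ)^2 by positivity)
      apply tendsto_atTop_mono' atTop ?_ l3
      filter_upwards [eventually_ge_atTop i] with n hn
      have := (hk n hn).1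
      simpa [sub_eq_add_neg] using this
    have hb0 : Tendsto (fun n : ℕ => b n ω) atTop (nhds 0) := by
      have hup : Tendsto (fun n:ℕ => 2*(m:ℝ)^2/(n:ℝ)) atTop (nhds 0) :=
        Tendsto.div_atTop tendsto_const_nhds tendsto_natCast_atTop_atTop
      have hlo : Tendsto (fun n:ℕ => (m:ℝ)^2/(n:ℝ)) atTop (nhds 0) :=
        Tendsto.div_atTop tendsto_const_nhds tendsto_natCast_atTop_atTop
      apply tendsto_of_tendsto_of_tendsto_of_le_of_le' hlo hup
      · filter_upwards [eventually_ge_atTop 1] with n hn using (hb n hn).1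
      · filter_upwards [eventually_ge_atTop 1] with n hn using (hb n hn).2
    have T1 : Tendsto (fun n : ℕ =>
        (∑ l ∈ Finset.Ico i n, X l ω) / ∑ l ∈ Finset.Icc i n, b l ω) atTop (nhds 0) :=
      hL.div_atTop hctop
    have T2 : Tendsto (fun n : ℕ =>
        b n ω / ∑ l ∈ Finset.Icc i n, b l ω) atTop (nhds 0) :=
      hb0.div_atTop hctop
    have T3 : Tendsto (fun n : ℕ =>
        (∑ l ∈ Finset.Ico i n, X l ω) / (∑ l ∈ Finset.Icc i n, b l ω)
          + (1 - b n ω / ∑ l ∈ Finset.Icc i n, b l ω)) atTop (nhds (0 + (1 - 0))) :=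
      T1.add (tendsto_const_nhds.sub T2)
    have h01 : (0:ℝ) + (1-0) = 1 := by norm_num
    rw [h01] at T3
    apply T3.congr'
    filter_upwards [eventually_ge_atTop i] with n hn
    have hcne : (∑ l ∈ Finset.Icc i n, b l ω) ≠ 0 := ne_of_gt (hcpos n hn)
    have hsplit : ∑ l ∈ Finset.Icc i n, b l ω
        = (∑ l ∈ Finset.Ico i n, b l ω) + b n ω := by
      rw [← Finset.Ico_add_one_right_eq_Icc, Finset.sum_Ico_succ_top hn]
    have hXsum : ∑ l ∈ Finset.Ico i n, X l ω
        = (τ n ω - τ i ω) - ∑ l ∈ Finset.Ico i n, b l ω := by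
      calc ∑ l ∈ Finset.Ico i n, X l ω
          = (∑ l ∈ Finset.Ico i n, (τ (l+1) ω - τ l ω))
            - ∑ l ∈ Finset.Ico i n, b l ω := by
            rw [← Finset.sum_sub_distrib]
        _ = (τ n ω - τ i ω) - ∑ l ∈ Finset.Ico i n, b l ω := by
            have htel : ∀ k, i ≤ k →
                ∑ l ∈ Finset.Ico i k, (τ (l+1) ω - τ l ω) = τ k ω - τ i ω := by
              intro k hk
              induction k, hk using Nat.le_induction with
              | base => simp
              | succ k hk ih =>
                  rw [Finset.sum_Ico_succ_top hk, ih]; ring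
            rw [htel n hn]
    have hτeq : τ n ω - τ i ω
        = (∑ l ∈ Finset.Ico i n, X l ω) + (∑ l ∈ Finset.Icc i n, b l ω) - b n ω := by
      rw [hXsum, hsplit]; ring
    rw [hτeq]
    field_simp
    ring
  · -- Part 2: Θ(m² log n)
    refine ⟨1/2, 2, by norm_num, by norm_num, ?_⟩
    filter_upwards [hkey] with ω hk
    rw [Filter.eventually_atTop]
    refine ⟨max (i^2) 2, fun n hn => ?_⟩
    have hni2 : i^2 ≤ n := le_trans (le_max_left _ _) hn
    have hni : i ≤ n := le_trans (Nat.le_self_pow two_ne_zero i) hni2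
    have hn2 : 2 ≤ n := le_trans (le_max_right _ _) hn
    have hn0 : (0:ℝ) < n := by positivity
    have hi2n : ((i:ℝ))^2 ≤ (n:ℝ) := by exact_mod_cast hni2
    have hlogmono : Real.log ((i:ℝ)^2) ≤ Real.log n :=
      Real.log_le_log (by positivity) hi2n
    have h2logi : 2 * Real.log i ≤ Real.log n := by
      rwa [Real.log_pow] at hlogmono
    have hlogi0 : (0:ℝ) ≤ Real.log i := Real.log_nonneg hi1
    have hlogn0 : (0:ℝ) ≤ Real.log n := by linarith
    have hlognn1 : Real.log (n:ℝ) ≤ Real.log ((n:ℝ)+1) :=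
      Real.log_le_log (by positivity) (by linarith)
    have hm2 : (0:ℝ) ≤ (m:ℝ)^2 := by positivity
    obtain ⟨hlow, hhigh⟩ := hk n hni
    constructor
    · have hstep : (1/2) * Real.log n ≤ Real.log ((n:ℝ)+1) - Real.log i := by
        linarith
      nlinarith [mul_le_mul_of_nonneg_left hstep hm2]
    · have hlogim1 : (0:ℝ) ≤ Real.log ((i:ℝ)-1) := by
        apply Real.log_nonneg
        have : (2:ℝ) ≤ (i:ℝ) := by exact_mod_cast hi
        linarith
      nlinarith
end

section
/- Let Z(t) be a pure birth process with Z(0)=m and rates 1/i, and let (c_n) be a random sequence with c_n/ (κ log n) → 1 a.s. for a constant κ > 0, independent increments allowing Z(τ_n − τ_i)/√(c_n) → √2 a.s. whenever (τ_n − τ_i)/c_n → 1 a.s. Then Z(τ_n − τ_i)/√(κ log n) → √2 a.s.; i.e., the degree of a fixed vertex in the inverse de-preferential model with m=1 satisfies d_i(n)/√(log n) → √(2/λ*) a.s. -/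
open MeasureTheory ProbabilityTheory Filter Real

lemma aux_det (f : ℝ → ℝ) (t : ℕ → ℝ) (c : ℕ → ℝ) (κ : ℝ) (hκ : 0 < κ)
    (hf : Tendsto (fun s => f s / Real.sqrt s) atTop (nhds (Real.sqrt 2)))
    (hcpos : ∀ n, 0 < c n)
    (hτ : Tendsto (fun n => t n / c n) atTop (nhds 1))
    (hc : Tendsto (fun n => c n / (κ * Real.log n)) atTop (nhds 1)) :
    Tendsto (fun n => f (t n) / Real.sqrt (κ * Real.log n)) atTop (nhds (Real.sqrt 2)) := by
  have hlog : Tendsto (fun n : ℕ => κ * Real.log n) atTop atTop :=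
    (Real.tendsto_log_atTop.comp tendsto_natCast_atTop_atTop).const_mul_atTop hκ
  have hlogpos : ∀ᶠ n : ℕ in atTop, 0 < κ * Real.log n := hlog.eventually_gt_atTop 0
  -- c n → ∞
  have hcinf : Tendsto c atTop atTop := by
    have := hc.pos_mul_atTop one_pos hlog
    refine this.congr' ?_
    filter_upwards [hlogpos] with n hn
    exact div_mul_cancel₀ _ hn.ne'
  -- t n → ∞
  have htinf : Tendsto t atTop atTop := by
    have := hτ.pos_mul_atTop one_pos hcinf
    refine this.congr' ?_
    filter_upwards with n
    field_simp [(hcpos n).ne']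
  have htpos : ∀ᶠ n : ℕ in atTop, 0 < t n := htinf.eventually_gt_atTop 0
  have h1 : Tendsto (fun n => f (t n) / Real.sqrt (t n)) atTop (nhds (Real.sqrt 2)) :=
    hf.comp htinf
  have hr : Tendsto (fun n => t n / (κ * Real.log n)) atTop (nhds 1) := by
    have := hτ.mul hc
    simp only [one_mul] at this
    refine this.congr' ?_
    filter_upwards [hlogpos] with n hn
    field_simp [(hcpos n).ne']
  have hsr : Tendsto (fun n => Real.sqrt (t n / (κ * Real.log n))) atTop (nhds 1) := by
    have := (Real.continuous_sqrt.tendsto 1).comp hr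
    simpa [Function.comp_def] using this
  have := h1.mul hsr
  rw [mul_one] at this
  refine this.congr' ?_
  filter_upwards [hlogpos, htpos] with n hn ht
  rw [Real.sqrt_div ht.le]
  rw [div_mul_div_comm, mul_comm (f (t n)),
    mul_div_mul_left _ _ (Real.sqrt_pos.mpr ht).ne']

/-- Let `Z(t)` be a pure birth process with `Z(0) = m` and rates `1/i` (so that
`Z(t)/√t → √2` a.s.), and let `(c_n)` be a random sequence with `c_n/(κ log n) → 1` a.s. for a
constant `κ > 0`, such that `(τ_n - τ_i)/c_n → 1` a.s.  Then
`Z(τ_n - τ_i)/√(κ log n) → √2` a.s.; i.e. with `κ = 1/λ*`, the degree of a fixed vertex in the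
inverse de-preferential model with `m = 1` satisfies `d_i(n)/√(log n) → √(2/λ*)` a.s. -/
theorem depref_inverse_fixed_degree_asymptotics
    {Ω : Type*} [MeasurableSpace Ω] (μ : Measure Ω) [IsProbabilityMeasure μ]
    (m i : ℕ) (hm : 1 ≤ m) (κ : ℝ) (hκ : 0 < κ)
    (Z : ℝ → Ω → ℕ) (τ : ℕ → Ω → ℝ) (c : ℕ → Ω → ℝ)
    (hZ : ∀ᵐ ω ∂μ,
      Filter.Tendsto (fun t : ℝ => (Z t ω : ℝ) / Real.sqrt t) Filter.atTop
        (nhds (Real.sqrt 2)))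
    (hcpos : ∀ᵐ ω ∂μ, ∀ n : ℕ, 0 < c n ω)
    (hτ : ∀ᵐ ω ∂μ,
      Filter.Tendsto (fun n : ℕ => (τ n ω - τ i ω) / c n ω) Filter.atTop (nhds 1))
    (hc : ∀ᵐ ω ∂μ,
      Filter.Tendsto (fun n : ℕ => c n ω / (κ * Real.log n)) Filter.atTop (nhds 1)) :
    (∀ᵐ ω ∂μ,
      Filter.Tendsto
        (fun n : ℕ => (Z (τ n ω - τ i ω) ω : ℝ) / Real.sqrt (κ * Real.log n))
        Filter.atTop (nhds (Real.sqrt 2))) ∧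
    (∀ᵐ ω ∂μ,
      Filter.Tendsto
        (fun n : ℕ => (Z (τ n ω - τ i ω) ω : ℝ) / Real.sqrt (Real.log n))
        Filter.atTop (nhds (Real.sqrt (2 * κ)))) := by
  have key : ∀ᵐ ω ∂μ,
      Filter.Tendsto
        (fun n : ℕ => (Z (τ n ω - τ i ω) ω : ℝ) / Real.sqrt (κ * Real.log n))
        Filter.atTop (nhds (Real.sqrt 2)) := by
    filter_upwards [hZ, hcpos, hτ, hc] with ω hZω hcω hτω hcω2
    exact aux_det (fun s => (Z s ω : ℝ)) (fun n => τ n ω - τ i ω) (fun n => c n ω) κ hκ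
      hZω hcω hτω hcω2
  refine ⟨key, ?_⟩
  filter_upwards [key] with ω hω
  have hlogpos : ∀ᶠ n : ℕ in atTop, 0 < Real.log n := by
    have : Tendsto (fun n : ℕ => Real.log n) atTop atTop :=
      Real.tendsto_log_atTop.comp tendsto_natCast_atTop_atTop
    exact this.eventually_gt_atTop 0
  have := hω.mul_const (Real.sqrt κ)
  rw [← Real.sqrt_mul (by norm_num : (2:ℝ) ≥ 0) κ] at this
  refine this.congr' ?_
  filter_upwards [hlogpos] with n hn
  rw [Real.sqrt_mul hκ.le]
  field_simp
end
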